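/- arXiv:1001.0515 — 2 statements merged into one kernel-verified Lean document; each statement's English description precedes it below -/
import Mathlib

section
/- Let T be a complete theory, N a saturated model of T, and P a ∅-definable set in N equipped with a distinguished ∅-definable total ordering <. If P is o-minimal in N, then P is 1-stably embedded in N and P has NIP in N. -/
/-!
Formalization of notions and results from A. Pillay,
"Stable embeddedness and NIP" (arXiv:1001.0515).

Conventions: we work in a model `N` of the complete theory `T = Th(N)`
(`N` will be assumed saturated in the theorems below), and `P` is a
`∅`-definable subset of `N`.  "Definable" means definable with parameters
(`Set.Definable` over the parameter set).  Tuples of elements of `N` are used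
to represent elements of `N^eq` (every imaginary is the image of a real tuple
under a `∅`-definable map, so this does not change the notions below).
The induced structure `𝒫` on `P` has as basic relations all subsets of the
`Pⁿ` that are `∅`-definable in `N`; its imaginaries (`𝒫^eq`) are represented
by `∅`-definable equivalence relations on tuples from `P` together with
representatives.
-/

open FirstOrder Language Set Cardinal

namespace StablyEmbeddedPaper

variable {L : FirstOrder.Language} {N : Type} [L.Structure N]



/-- `P` is *stably embedded* in `N`: for every `n`, every subset of `Pⁿ` definable in `N`
with arbitrary parameters is definable in `N` with parameters from `P`. -/
def StablyEmbedded (L : FirstOrder.Language) [L.Structure N] (P : Set N) : Prop :=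
  ∀ (n : ℕ) (s : Set (Fin n → N)), (univ : Set N).Definable L s →
    (∀ f ∈ s, ∀ i, f i ∈ P) → P.Definable L s

/-- `P` is *1-stably embedded* in `N`: every subset of `P` definable in `N` with parameters
is definable with parameters from `P`. -/
def OneStablyEmbedded (L : FirstOrder.Language) [L.Structure N] (P : Set N) : Prop :=
  ∀ s : Set (Fin 1 → N), (univ : Set N).Definable L s →
    (∀ f ∈ s, ∀ i, f i ∈ P) → P.Definable L s

/-- `P` has NIP in `N` (equivalently, in `T = Th(N)`): there are no formula `φ(x̄, y)` with
`x̄` a tuple of variables of sort `P`, tuples `āᵢ ⊆ P` (`i < ω`) and tuples `b_s` (`s ⊆ ω`)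
(tuples of `N` representing arbitrary elements of `N^eq`, each imaginary being the image of a
real tuple under a definable map) such that `N ⊨ φ(āᵢ, b_s)` iff `i ∈ s`. -/
def HasNIPIn (L : FirstOrder.Language) [L.Structure N] (P : Set N) : Prop :=
  ¬ ∃ (n m : ℕ) (φ : L.Formula (Fin n ⊕ Fin m)) (a : ℕ → Fin n → N) (b : Set ℕ → Fin m → N),
      (∀ i k, a i k ∈ P) ∧ ∀ (i : ℕ) (s : Set ℕ), φ.Realize (Sum.elim (a i) (b s)) ↔ i ∈ s

/-- `P` is *stable* in `N`: there are no formula `φ(x̄, y)`, tuples `āᵢ ⊆ P` and tuples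
`bᵢ` from `N` (representing elements of `N^eq`) for `i < ω`, such that
`N ⊨ φ(āᵢ, b_j)` iff `i ≤ j`. -/
def StableIn (L : FirstOrder.Language) [L.Structure N] (P : Set N) : Prop :=
  ¬ ∃ (n m : ℕ) (φ : L.Formula (Fin n ⊕ Fin m)) (a : ℕ → Fin n → N) (b : ℕ → Fin m → N),
      (∀ i k, a i k ∈ P) ∧ ∀ i j : ℕ, φ.Realize (Sum.elim (a i) (b j)) ↔ i ≤ j

/-- Two (possibly infinite) tuples have the same type over the parameter set `A`. -/
def SameTypeOver (L : FirstOrder.Language) [L.Structure N] (A : Set N) {α : Type}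
    (a a' : α → N) : Prop :=
  ∀ (m : ℕ) (φ : L.Formula (α ⊕ Fin m)) (b : Fin m → N), (∀ i, b i ∈ A) →
    (φ.Realize (Sum.elim a b) ↔ φ.Realize (Sum.elim a' b))

/-- A sequence of `m`-tuples is indiscernible over `A`. -/
def IndiscernibleOver (L : FirstOrder.Language) [L.Structure N] (A : Set N) {m : ℕ}
    (bs : ℕ → Fin m → N) : Prop :=
  ∀ (n : ℕ) (f g : Fin n → ℕ), StrictMono f → StrictMono g →
    SameTypeOver L A (fun p : Fin n × Fin m => bs (f p.1) p.2)
      (fun p : Fin n × Fin m => bs (g p.1) p.2)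

/-- The formula `φ(x, b)` divides over `A`: there is an `A`-indiscernible sequence
`(bᵢ)_{i<ω}` with `b₀ = b` such that `{φ(x, bᵢ) : i < ω}` is inconsistent. -/
def Divides (L : FirstOrder.Language) [L.Structure N] {α : Type} {m : ℕ}
    (φ : L.Formula (α ⊕ Fin m)) (b : Fin m → N) (A : Set N) : Prop :=
  ∃ bs : ℕ → Fin m → N, bs 0 = b ∧ IndiscernibleOver L A bs ∧
    ∃ F : Finset ℕ, ¬ ∃ x : α → N, ∀ i ∈ F, φ.Realize (Sum.elim x (bs i))

/-- A definable set (thought of as a formula with parameters) forks over `A`: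
it implies a finite disjunction of formulas, each of which divides over `A`. -/
def SetForksOver (L : FirstOrder.Language) [L.Structure N] {α : Type}
    (s : Set (α → N)) (A : Set N) : Prop :=
  ∃ (J : ℕ) (m : Fin J → ℕ) (φ : ∀ j, L.Formula (α ⊕ Fin (m j))) (b : ∀ j, Fin (m j) → N),
    (∀ j, Divides L (φ j) (b j) A) ∧ ∀ x ∈ s, ∃ j, (φ j).Realize (Sum.elim x (b j))

/-- `tp(a/B)` forks over `A`: the complete type of `a` over `B` implies a finite
disjunction of formulas each of which divides over `A` (equivalently, by compactness,
some `B`-definable set containing `a` forks over `A`). -/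
def TypeForksOver (L : FirstOrder.Language) [L.Structure N] {α : Type}
    (a : α → N) (B A : Set N) : Prop :=
  ∃ s : Set (α → N), B.Definable L s ∧ a ∈ s ∧ SetForksOver L s A

/-- `N` is a saturated model: every set of formulas in one free variable with parameters
from a set of cardinality less than `#N`, which is finitely satisfiable in `N`,
is realized in `N`. -/
def IsSaturated (L : FirstOrder.Language) [L.Structure N] : Prop :=
  ∀ A : Set N, #A < #N →
    ∀ p : Set (Σ m : ℕ, L.Formula (Fin 1 ⊕ Fin m) × (Fin m → N)),
      (∀ q ∈ p, ∀ i, q.2.2 i ∈ A) →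
      (∀ F : Finset (Σ m : ℕ, L.Formula (Fin 1 ⊕ Fin m) × (Fin m → N)), ↑F ⊆ p →
        ∃ x : N, ∀ q ∈ F, q.2.1.Realize (Sum.elim (fun _ => x) q.2.2)) →
      ∃ x : N, ∀ q ∈ p, q.2.1.Realize (Sum.elim (fun _ => x) q.2.2)

/-- The (complete) theory of `N` has NIP: no formula `φ(x̄, ȳ)` has the independence
property (stated in the saturated model `N`). -/
def TheoryHasNIP (L : FirstOrder.Language) (N : Type*) [L.Structure N] : Prop :=
  ¬ ∃ (n m : ℕ) (φ : L.Formula (Fin n ⊕ Fin m)) (a : ℕ → Fin n → N) (b : Set ℕ → Fin m → N),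
      ∀ (i : ℕ) (s : Set ℕ), φ.Realize (Sum.elim (a i) (b s)) ↔ i ∈ s

/-- `P`, with the distinguished `∅`-definable total ordering `lt`, is *o-minimal in `N`*:
every subset of `P` definable in `N` with parameters is a finite union of intervals (with
endpoints in `P`, together with `±∞`) and points. -/
def OMinimalIn (L : FirstOrder.Language) [L.Structure N] (P : Set N)
    (lt : N → N → Prop) : Prop :=
  ∀ s : Set N, Set.Definable₁ (univ : Set N) L s → s ⊆ P →
    ∃ (k : ℕ) (I : Fin k → Set N), s = ⋃ i, I i ∧ ∀ i,
      (∃ a ∈ P, ∃ b ∈ P, I i = {x ∈ P | lt a x ∧ lt x b}) ∨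
      (∃ a ∈ P, I i = {x ∈ P | lt a x}) ∨
      (∃ b ∈ P, I i = {x ∈ P | lt x b}) ∨
      I i = P ∨
      (∃ a ∈ P, I i = {a})

section Aux

set_option linter.unusedSectionVars false
set_option maxHeartbeats 1000000

variable {P : Set N} {lt : N → N → Prop}

theorem definable_section {α β : Type} (B : Set N) (f : L.Formula (α ⊕ β)) (c : β → N)
    (hc : ∀ j, c j ∈ B) : B.Definable L {x : α → N | f.Realize (Sum.elim x c)} := by
  rw [Set.definable_iff_exists_formula_sum]
  refine ⟨f.relabel (Sum.elim Sum.inr (fun j => Sum.inl ⟨c j, hc j⟩)), ?_⟩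
  ext v
  rw [mem_setOf_eq, mem_setOf_eq, Formula.realize_relabel]
  congr! 1
  funext a
  rcases a with a | b <;> simp

noncomputable def atVar {γ : Type} (p : L.Formula (Fin 1)) (t : γ) : L.Formula γ :=
  p.relabel (fun _ => t)

theorem realize_atVar {γ : Type} {p : L.Formula (Fin 1)} {t : γ} {v : γ → N} :
    (atVar p t).Realize v ↔ p.Realize (fun _ => v t) := by
  rw [atVar, Formula.realize_relabel]
  exact iff_of_eq (congrArg _ (funext fun i => rfl))

noncomputable def atVar2 {γ : Type} (p : L.Formula (Fin 2)) (t₁ t₂ : γ) : L.Formula γ :=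
  p.relabel (fun i => if i = 0 then t₁ else t₂)

theorem realize_atVar2 {γ : Type} {p : L.Formula (Fin 2)} {t₁ t₂ : γ} {v : γ → N} :
    (atVar2 p t₁ t₂).Realize v ↔ p.Realize ![v t₁, v t₂] := by
  rw [atVar2, Formula.realize_relabel]
  refine iff_of_eq (congrArg _ (funext fun i => ?_))
  fin_cases i <;> rfl

noncomputable def iExsR {α β γ : Type} [Finite γ] (f : α → β ⊕ γ) (φ : L.Formula α) :
    L.Formula β :=
  Formula.iExs γ (φ.relabel f)

theorem realize_iExsR {α β γ : Type} [Finite γ] {f : α → β ⊕ γ} {φ : L.Formula α}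
    {v : β → N} :
    (iExsR f φ).Realize v ↔ ∃ i : γ → N, φ.Realize (fun a => Sum.elim v i (f a)) := by
  rw [iExsR, Formula.realize_iExs]
  simp only [Formula.realize_relabel]
  rfl

noncomputable def iInfS {α β : Type} (s : Finset β) (f : β → L.Formula α) : L.Formula α :=
  BoundedFormula.iInf (fun b : s => f b)

section OSE
variable {P : Set N} {lt : N → N → Prop}

theorem fin1_eq_const (f : Fin 1 → N) : f = (fun _ => f 0) :=
  funext fun i => by rw [Subsingleton.elim i 0]

/-- every subset of `P` of one of the o-minimal "interval" shapes is `P`-definable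
    (as a set of 1-tuples). -/
theorem shape_definable (pP : L.Formula (Fin 1)) (hpP : ∀ x : N, (pP.Realize (fun _ => x)) ↔ x ∈ P)
    (plt : L.Formula (Fin 2)) (hplt : ∀ x y : N, (plt.Realize ![x, y]) ↔ lt x y)
    (I : Set N)
    (h : (∃ a ∈ P, ∃ b ∈ P, I = {x ∈ P | lt a x ∧ lt x b}) ∨
      (∃ a ∈ P, I = {x ∈ P | lt a x}) ∨
      (∃ b ∈ P, I = {x ∈ P | lt x b}) ∨
      I = P ∨
      (∃ a ∈ P, I = {a})) :
    P.Definable L {f : Fin 1 → N | f 0 ∈ I} := by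
  have hset : ∀ (β : Type) (F : L.Formula (Fin 1 ⊕ β)) (c : β → N), (∀ j, c j ∈ P) →
      (∀ x : N, F.Realize (Sum.elim (fun _ : Fin 1 => x) c) ↔ x ∈ I) →
      P.Definable L {f : Fin 1 → N | f 0 ∈ I} := by
    intro β F c hc hiff
    have := definable_section P F c hc
    convert this using 1
    ext f
    rw [mem_setOf_eq, mem_setOf_eq, fin1_eq_const f]
    exact (hiff (f 0)).symm
  rcases h with ⟨a, ha, b, hb, rfl⟩ | ⟨a, ha, rfl⟩ | ⟨b, hb, rfl⟩ | rfl | ⟨a, ha, rfl⟩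
  · refine hset (Fin 2) ((atVar pP (Sum.inl 0) ⊓ atVar2 plt (Sum.inr 0) (Sum.inl 0)) ⊓
      atVar2 plt (Sum.inl 0) (Sum.inr 1)) ![a, b] ?_ ?_
    · intro j; fin_cases j <;> assumption
    · intro x
      simp only [Formula.realize_inf, realize_atVar, realize_atVar2]
      simp [hpP, hplt, mem_setOf_eq]
      tauto
  · refine hset (Fin 1) (atVar pP (Sum.inl 0) ⊓ atVar2 plt (Sum.inr 0) (Sum.inl 0)) (fun _ => a)
      (fun j => ha) ?_
    intro x
    simp only [Formula.realize_inf, realize_atVar, realize_atVar2]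
    simp [hpP, hplt, mem_setOf_eq]
  · refine hset (Fin 1) (atVar pP (Sum.inl 0) ⊓ atVar2 plt (Sum.inl 0) (Sum.inr 0)) (fun _ => b)
      (fun j => hb) ?_
    intro x
    simp only [Formula.realize_inf, realize_atVar, realize_atVar2]
    simp [hpP, hplt, mem_setOf_eq]
  · refine hset (Fin 0) (atVar pP (Sum.inl 0)) finZeroElim (fun j => j.elim0) ?_
    intro x
    simp only [realize_atVar]
    simp [hpP]
  · refine hset (Fin 1) (Term.equal (Term.var (Sum.inl 0)) (Term.var (Sum.inr 0)))
      (fun _ => a) (fun j => ha) ?_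
    intro x
    simp [Formula.realize_equal]

end OSE
variable (L N) in
/-- A formula in `k` free variables together with a tuple of parameters. -/
structure PF (k : ℕ) : Type _ where
  m : ℕ
  f : L.Formula (Fin k ⊕ Fin m)
  c : Fin m → N

/-- Satisfaction of a parameterized formula by a `k`-tuple. -/
def PF.Sat {k : ℕ} (q : PF L N k) (x : Fin k → N) : Prop := q.f.Realize (Sum.elim x q.c)

noncomputable def PF.and {k : ℕ} (q r : PF L N k) : PF L N k :=
  ⟨q.m + r.m,
   (q.f.relabel (Sum.map id (Fin.castAdd r.m))) ⊓ (r.f.relabel (Sum.map id (Fin.natAdd q.m))),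
   Fin.append q.c r.c⟩

theorem PF.sat_and {k : ℕ} {q r : PF L N k} {x : Fin k → N} :
    (q.and r).Sat x ↔ q.Sat x ∧ r.Sat x := by
  simp only [PF.Sat, PF.and, Formula.realize_inf, Formula.realize_relabel]
  constructor <;> (rintro ⟨h1, h2⟩; constructor) <;>
  · first
    | (convert h1 using 1; funext a; rcases a with i | j <;> simp [Fin.append_left])
    | (convert h2 using 1; funext a; rcases a with i | j <;> simp [Fin.append_right])

noncomputable def PF.conj {k : ℕ} (l : List (PF L N k)) : PF L N k :=
  l.foldr PF.and ⟨0, ⊤, finZeroElim⟩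

theorem PF.conj_nil {k : ℕ} : (PF.conj ([] : List (PF L N k))) = ⟨0, ⊤, finZeroElim⟩ := rfl

theorem PF.conj_cons {k : ℕ} {q : PF L N k} {l : List (PF L N k)} :
    PF.conj (q :: l) = q.and (PF.conj l) := rfl

theorem PF.sat_conj {k : ℕ} {l : List (PF L N k)} {x : Fin k → N} :
    (PF.conj l).Sat x ↔ ∀ q ∈ l, q.Sat x := by
  induction l with
  | nil => simp [PF.conj_nil, PF.Sat]
  | cons q l ih => simp [PF.conj_cons, PF.sat_and, ih]

theorem PF.conj_params {k : ℕ} {A : Set N} {l : List (PF L N k)}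
    (h : ∀ q ∈ l, ∀ j, q.c j ∈ A) : ∀ j, (PF.conj l).c j ∈ A := by
  induction l with
  | nil => exact fun j => j.elim0
  | cons q l ih =>
    rw [PF.conj_cons]
    show ∀ j : Fin (q.m + (PF.conj l).m), Fin.append q.c (PF.conj l).c j ∈ A
    intro j
    refine Fin.addCases (fun i => ?_) (fun i => ?_) j
    · rw [Fin.append_left]
      exact h q (by simp) i
    · rw [Fin.append_right]
      exact ih (fun r hr => h r (by simp [hr])) i

noncomputable def PF.eproj {k : ℕ} (q : PF L N (k+1)) : PF L N 1 :=
  ⟨q.m, iExsR (fun a => match a with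
      | Sum.inl i => Fin.cases (Sum.inl (Sum.inl 0)) (fun i' => Sum.inr i') i
      | Sum.inr j => Sum.inl (Sum.inr j)) q.f, q.c⟩

theorem PF.sat_eproj {k : ℕ} {q : PF L N (k+1)} {y : N} :
    (q.eproj).Sat (fun _ => y) ↔ ∃ w : Fin k → N, q.Sat (Fin.cases y w) := by
  rw [PF.Sat, PF.eproj, realize_iExsR]
  refine exists_congr fun w => iff_of_eq (congrArg _ (funext fun a => ?_))
  rcases a with i | j
  · refine Fin.cases ?_ (fun i' => ?_) i <;> simp
  · simp

noncomputable def PF.plug {k : ℕ} (y : N) (q : PF L N (k+1)) : PF L N k :=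
  ⟨q.m + 1, q.f.relabel (fun a => match a with
     | Sum.inl i => Fin.cases (Sum.inr (Fin.last q.m)) (fun i' => Sum.inl i') i
     | Sum.inr j => Sum.inr (Fin.castSucc j)), Fin.snoc q.c y⟩

theorem PF.sat_plug {k : ℕ} {y : N} {q : PF L N (k+1)} {x : Fin k → N} :
    (q.plug y).Sat x ↔ q.Sat (Fin.cases y x) := by
  rw [PF.Sat, PF.plug, Formula.realize_relabel]
  refine iff_of_eq (congrArg _ (funext fun a => ?_))
  rcases a with i | j
  · refine Fin.cases ?_ (fun i' => ?_) i <;> simp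
  · simp

theorem fin_cases_self {k : ℕ} (x : Fin (k+1) → N) :
    (Fin.cases (x 0) (fun i => x i.succ) : Fin (k+1) → N) = x := by
  funext i
  refine Fin.cases ?_ (fun i' => ?_) i <;> simp

theorem sat1 (hsat : IsSaturated (N := N) L) {A : Set N} (hA : #A < #N)
    (p : Set (PF L N 1)) (hp : ∀ q ∈ p, ∀ j, q.c j ∈ A)
    (hfin : ∀ l : List (PF L N 1), (∀ q ∈ l, q ∈ p) → ∃ x : N, ∀ q ∈ l, q.Sat (fun _ => x)) :
    ∃ x : N, ∀ q ∈ p, q.Sat (fun _ => x) := by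
  classical
  set p' : Set (Σ m : ℕ, L.Formula (Fin 1 ⊕ Fin m) × (Fin m → N)) :=
    (fun q : PF L N 1 => (⟨q.m, q.f, q.c⟩ : Σ m : ℕ, L.Formula (Fin 1 ⊕ Fin m) × (Fin m → N))) '' p
    with hp'
  have hpar : ∀ q ∈ p', ∀ i, q.2.2 i ∈ A := by
    rintro σ ⟨r, hr, rfl⟩ i
    exact hp r hr i
  have hfs : ∀ F : Finset (Σ m : ℕ, L.Formula (Fin 1 ⊕ Fin m) × (Fin m → N)), ↑F ⊆ p' →
      ∃ x : N, ∀ q ∈ F, q.2.1.Realize (Sum.elim (fun _ => x) q.2.2) := by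
    intro F hF
    have hmem : ∀ σ ∈ F, ∃ q, q ∈ p ∧
        (⟨q.m, q.f, q.c⟩ : Σ m : ℕ, L.Formula (Fin 1 ⊕ Fin m) × (Fin m → N)) = σ := by
      intro σ hσ
      obtain ⟨q, hq, h⟩ := hF hσ
      exact ⟨q, hq, h⟩
    choose g hg1 hg2 using hmem
    classical
    let lst : List (PF L N 1) := F.attach.toList.map (fun σ => g σ.1 σ.2)
    have hlst : ∀ q ∈ lst, q ∈ p := by
      intro q hq
      simp only [lst, List.mem_map] at hq
      obtain ⟨σ, _, rfl⟩ := hq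
      exact hg1 σ.1 σ.2
    obtain ⟨x, hx⟩ := hfin lst hlst
    refine ⟨x, fun σ hσ => ?_⟩
    have hs := hx (g σ hσ) (by
      simp only [lst, List.mem_map]
      exact ⟨⟨σ, hσ⟩, by simp, rfl⟩)
    rw [← hg2 σ hσ]
    exact hs
  obtain ⟨x, hx⟩ := hsat A hA p' hpar hfs
  exact ⟨x, fun q hq => hx ⟨q.m, q.f, q.c⟩ ⟨q, hq, rfl⟩⟩

theorem satk (hsat : IsSaturated (N := N) L) (hN : ℵ₀ < #N) :
    ∀ (k : ℕ) (A : Set N), A.Countable →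
    ∀ (p : Set (PF L N k)), (∀ q ∈ p, ∀ j, q.c j ∈ A) →
    (∀ l : List (PF L N k), (∀ q ∈ l, q ∈ p) → ∃ x : Fin k → N, ∀ q ∈ l, q.Sat x) →
    ∃ x : Fin k → N, ∀ q ∈ p, q.Sat x := by
  have hAcard : ∀ (A : Set N), A.Countable → #A < #N := by
    intro A hA
    refine lt_of_le_of_lt ?_ hN
    rw [Cardinal.mk_le_aleph0_iff, ← Set.countable_coe_iff] at *
    exact hA
  intro k
  induction k with
  | zero =>
    intro A hA p hp hfin
    refine ⟨finZeroElim, fun q hq => ?_⟩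
    obtain ⟨x, hx⟩ := hfin [q] (by simp [hq])
    have h := hx q (by simp)
    have hxx : x = finZeroElim := funext fun i => i.elim0
    rw [hxx] at h
    exact h
  | succ k ih =>
    intro A hA p hp hfin
    classical
    set p₁ : Set (PF L N 1) :=
      {r | ∃ l : List (PF L N (k+1)), (∀ q ∈ l, q ∈ p) ∧ r = (PF.conj l).eproj} with hp₁def
    have hp₁ : ∀ r ∈ p₁, ∀ j, r.c j ∈ A := by
      rintro r ⟨l, hl, rfl⟩ j
      exact PF.conj_params (fun q hq => hp q (hl q hq)) j
    have hfin₁ : ∀ l₁ : List (PF L N 1), (∀ r ∈ l₁, r ∈ p₁) →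
        ∃ x : N, ∀ r ∈ l₁, r.Sat (fun _ => x) := by
      intro l₁ hl₁
      choose gl hgl1 hgl2 using fun (r : {r // r ∈ l₁}) => hl₁ r.1 r.2
      have hsub : ∀ q ∈ (l₁.attach.map gl).flatten, q ∈ p := by
        intro q hq
        obtain ⟨l', hl', hq'⟩ := List.mem_flatten.mp hq
        obtain ⟨r, _, rfl⟩ := List.mem_map.mp hl'
        exact hgl1 r q hq'
      obtain ⟨x, hx⟩ := hfin ((l₁.attach.map gl).flatten) hsub
      refine ⟨x 0, fun r hr => ?_⟩
      rw [show r = (PF.conj (gl ⟨r, hr⟩)).eproj from hgl2 ⟨r, hr⟩, PF.sat_eproj]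
      refine ⟨fun i => x i.succ, ?_⟩
      rw [fin_cases_self]
      rw [PF.sat_conj]
      intro q hq
      exact hx q (List.mem_flatten.mpr ⟨gl ⟨r, hr⟩, List.mem_map.mpr ⟨⟨r, hr⟩, by simp, rfl⟩, hq⟩)
    obtain ⟨y, hy⟩ := sat1 hsat (hAcard A hA) p₁ hp₁ hfin₁
    set p₂ : Set (PF L N k) := (PF.plug y) '' p with hp₂def
    have hpar₂ : ∀ r ∈ p₂, ∀ j, r.c j ∈ A ∪ {y} := by
      rintro r ⟨q, hq, rfl⟩
      show ∀ j : Fin (q.m + 1), Fin.snoc (α := fun _ => N) q.c y j ∈ A ∪ {y}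
      intro j
      refine Fin.lastCases ?_ (fun j' => ?_) j
      · rw [Fin.snoc_last]; exact Or.inr rfl
      · rw [Fin.snoc_castSucc]; exact Or.inl (hp q hq j')
    have hfin₂ : ∀ l₂ : List (PF L N k), (∀ q ∈ l₂, q ∈ p₂) →
        ∃ x : Fin k → N, ∀ q ∈ l₂, q.Sat x := by
      intro l₂ hl₂
      choose gq hgq1 hgq2 using fun (r : {r // r ∈ l₂}) => hl₂ r.1 r.2
      have hconj : (PF.conj (l₂.attach.map gq)).eproj ∈ p₁ := by
        exact ⟨l₂.attach.map gq, by
          intro q hq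
          obtain ⟨r, _, rfl⟩ := List.mem_map.mp hq
          exact hgq1 r, rfl⟩
      have := hy _ hconj
      rw [PF.sat_eproj] at this
      obtain ⟨w, hw⟩ := this
      rw [PF.sat_conj] at hw
      refine ⟨w, fun r hr => ?_⟩
      have h3 : r = PF.plug y (gq ⟨r, hr⟩) := (hgq2 ⟨r, hr⟩).symm
      rw [h3, PF.sat_plug]
      exact hw _ (List.mem_map.mpr ⟨⟨r, hr⟩, by simp, rfl⟩)
    obtain ⟨x', hx'⟩ := ih (A ∪ {y}) (hA.union (Set.countable_singleton y)) p₂ hpar₂ hfin₂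
    refine ⟨Fin.cases y x', fun q hq => ?_⟩
    rw [← PF.sat_plug]
    exact hx' _ ⟨q, hq, rfl⟩

variable {P : Set N} {lt : N → N → Prop}

/-- convexity of a subset of `P` with respect to `lt` -/
def Cvx (P : Set N) (lt : N → N → Prop) (C : Set N) : Prop :=
  ∀ x ∈ C, ∀ y ∈ C, ∀ z ∈ P, lt x z → lt z y → z ∈ C

theorem shapes_convex
    (hirr : ∀ x ∈ P, ¬ lt x x)
    (htrans : ∀ x ∈ P, ∀ y ∈ P, ∀ z ∈ P, lt x y → lt y z → lt x z)
    (I : Set N)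
    (h : (∃ a ∈ P, ∃ b ∈ P, I = {x ∈ P | lt a x ∧ lt x b}) ∨
      (∃ a ∈ P, I = {x ∈ P | lt a x}) ∨
      (∃ b ∈ P, I = {x ∈ P | lt x b}) ∨
      I = P ∨
      (∃ a ∈ P, I = {a})) :
    I ⊆ P ∧ Cvx P lt I := by
  rcases h with ⟨a, ha, b, hb, rfl⟩ | ⟨a, ha, rfl⟩ | ⟨b, hb, rfl⟩ | rfl | ⟨a, ha, rfl⟩
  · refine ⟨fun x hx => hx.1, ?_⟩
    rintro x ⟨hxP, hax, _⟩ y ⟨hyP, _, hyb⟩ z hzP hxz hzy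
    exact ⟨hzP, htrans a ha x hxP z hzP hax hxz, htrans z hzP y hyP b hb hzy hyb⟩
  · refine ⟨fun x hx => hx.1, ?_⟩
    rintro x ⟨hxP, hax⟩ y ⟨hyP, _⟩ z hzP hxz _
    exact ⟨hzP, htrans a ha x hxP z hzP hax hxz⟩
  · refine ⟨fun x hx => hx.1, ?_⟩
    rintro x ⟨hxP, _⟩ y ⟨hyP, hyb⟩ z hzP _ hzy
    exact ⟨hzP, htrans z hzP y hyP b hb hzy hyb⟩
  · exact ⟨subset_rfl, fun x _ y _ z hz _ _ => hz⟩
  · refine ⟨fun x hx => hx ▸ ha, ?_⟩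
    intro x hx y hy z hzP hxz hzy
    rw [mem_singleton_iff] at hx hy
    exact (False.elim (hirr a ha (htrans a ha z hzP a ha (hx ▸ hxz) (hy ▸ hzy))) :
      z ∈ ({a} : Set N))

/-- any definable subset of `P` contains a final segment of any monotone sequence
meeting it infinitely often -/
theorem chain_tail
    (homin : ∀ s : Set N, Set.Definable₁ (univ : Set N) L s → s ⊆ P →
      ∃ (k : ℕ) (I : Fin k → Set N), s = ⋃ i, I i ∧ ∀ i,
        (∃ a ∈ P, ∃ b ∈ P, I i = {x ∈ P | lt a x ∧ lt x b}) ∨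
        (∃ a ∈ P, I i = {x ∈ P | lt a x}) ∨
        (∃ b ∈ P, I i = {x ∈ P | lt x b}) ∨
        I i = P ∨
        (∃ a ∈ P, I i = {a}))
    (hirr : ∀ x ∈ P, ¬ lt x x)
    (htrans : ∀ x ∈ P, ∀ y ∈ P, ∀ z ∈ P, lt x y → lt y z → lt x z)
    (q : ℕ → N) (hq : ∀ i, q i ∈ P)
    (hmono : (∀ i j, i < j → lt (q i) (q j)) ∨ (∀ i j, i < j → lt (q j) (q i)))
    (X : Set N) (hX : Set.Definable₁ (univ : Set N) L X) (hXP : X ⊆ P)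
    (hinf : {i | q i ∈ X}.Infinite) :
    ∃ i₀, ∀ i, i₀ ≤ i → q i ∈ X := by
  obtain ⟨k, I, hU, hsh⟩ := homin X hX hXP
  have hpiece : ∃ t : Fin k, {i | q i ∈ I t}.Infinite := by
    by_contra hc
    push_neg at hc
    refine hinf (Set.Finite.subset (Set.finite_iUnion hc) ?_)
    intro i hi
    rw [hU] at hi
    obtain ⟨t, ht⟩ := Set.mem_iUnion.mp hi
    exact Set.mem_iUnion.mpr ⟨t, ht⟩
  obtain ⟨t, hT⟩ := hpiece
  obtain ⟨hIP, hcvx⟩ := shapes_convex hirr htrans (I t) (hsh t)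
  have hsubX : I t ⊆ X := hU ▸ Set.subset_iUnion I t
  obtain ⟨i₀, hi₀⟩ := hT.nonempty
  refine ⟨i₀, fun i hi => ?_⟩
  rcases eq_or_lt_of_le hi with rfl | hlt
  · exact hsubX hi₀
  by_cases hmem : q i ∈ I t
  · exact hsubX hmem
  obtain ⟨j, hjT, hij⟩ := hT.exists_gt i
  refine hsubX ?_
  rcases hmono with hinc | hdec
  · exact hcvx (q i₀) hi₀ (q j) hjT (q i) (hq i) (hinc _ _ hlt) (hinc _ _ hij)
  · exact hcvx (q j) hjT (q i₀) hi₀ (q i) (hq i) (hdec _ _ hij) (hdec _ _ hlt)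

/-- monotone subsequence in a `P`-total order -/
theorem exists_chain_subseq
    (htrans : ∀ x ∈ P, ∀ y ∈ P, ∀ z ∈ P, lt x y → lt y z → lt x z)
    (htotal : ∀ x ∈ P, ∀ y ∈ P, lt x y ∨ x = y ∨ lt y x)
    (p : ℕ → N) (hp : ∀ i, p i ∈ P) (hinj : Function.Injective p) :
    ∃ g : ℕ → ℕ, StrictMono g ∧
      ((∀ i j, i < j → lt (p (g i)) (p (g j))) ∨ (∀ i j, i < j → lt (p (g j)) (p (g i)))) := by
  have : IsTrans ℕ (fun i j => lt (p i) (p j)) :=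
    ⟨fun a b c hab hbc => htrans _ (hp a) _ (hp b) _ (hp c) hab hbc⟩
  obtain ⟨g, hg⟩ := exists_increasing_or_nonincreasing_subseq (fun i j => lt (p i) (p j)) id
  rcases hg with hinc | hnot
  · exact ⟨g, g.strictMono, Or.inl fun i j hij => hinc i j hij⟩
  · refine ⟨g, g.strictMono, Or.inr fun i j hij => ?_⟩
    rcases htotal (p (g i)) (hp _) (p (g j)) (hp _) with h | h | h
    · exact absurd h (hnot i j hij)
    · exact absurd (hinj h) (g.strictMono.injective.ne (Nat.ne_of_lt hij))
    · exact h

/-- find a coordinate along which an injective sequence of tuples has an injective,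
`lt`-monotone subsequence -/
theorem exists_coord_chain {n : ℕ}
    (htrans : ∀ x ∈ P, ∀ y ∈ P, ∀ z ∈ P, lt x y → lt y z → lt x z)
    (htotal : ∀ x ∈ P, ∀ y ∈ P, lt x y ∨ x = y ∨ lt y x)
    (e : ℕ → Fin n → N) (he : ∀ i k, e i k ∈ P) (hinj : Function.Injective e) :
    ∃ (k₀ : Fin n) (σ : ℕ → ℕ), Function.Injective σ ∧
      ((∀ i j, i < j → lt (e (σ i) k₀) (e (σ j) k₀)) ∨
        (∀ i j, i < j → lt (e (σ j) k₀) (e (σ i) k₀))) := by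
  have hex : ∃ k₀ : Fin n, (Set.range (fun i => e i k₀)).Infinite := by
    by_contra hfin
    push_neg at hfin
    have hPi : (Set.pi (Set.univ : Set (Fin n)) (fun k => Set.range (fun i => e i k))).Finite :=
      Set.Finite.pi fun k => hfin k
    have hsub : Set.range e ⊆ Set.pi Set.univ (fun k => Set.range (fun i => e i k)) := by
      rintro f ⟨i, rfl⟩ k _
      exact ⟨i, rfl⟩
    exact Set.infinite_range_of_injective hinj (hPi.subset hsub)
  obtain ⟨k₀, hk₀⟩ := hex
  let w := hk₀.natEmbedding
  have hch : ∀ t : ℕ, ∃ i, e i k₀ = (w t : N) := fun t => (w t).2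
  choose h hh using hch
  have hvinj : Function.Injective (fun t => e (h t) k₀) := by
    intro a b hab
    simp only [hh] at hab
    exact w.injective (Subtype.ext hab)
  obtain ⟨g, hgmono, hgc⟩ := exists_chain_subseq htrans htotal (fun t => e (h t) k₀)
    (fun t => he (h t) k₀) hvinj
  refine ⟨k₀, h ∘ g, ?_, hgc⟩
  intro a b hab
  exact hgmono.injective (hvinj (by simpa using congrArg (fun i => e i k₀) hab))

/-- an independent family of subsets of ℕ -/
noncomputable def indep (t : ℕ) : Set ℕ :=
  {k | t ∈ (Denumerable.ofNat (Finset ℕ) k.unpair.1 : Finset ℕ)}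

theorem indep_infinite (Lv : ℕ) (η : Fin Lv → Bool) :
    {i : ℕ | ∀ t : Fin Lv, (i ∈ indep t ↔ η t = true)}.Infinite := by
  classical
  set V : Finset ℕ := Finset.image (fun t : Fin Lv => (t : ℕ))
    (Finset.univ.filter (fun t => η t = true)) with hV
  obtain ⟨code, hcode⟩ : ∃ c, (Denumerable.ofNat (Finset ℕ) c) = V :=
    ⟨_, Denumerable.ofNat_encode V⟩
  refine Set.infinite_of_injective_forall_mem
    (f := fun j : ℕ => Nat.pair code j) ?_ ?_
  · intro a b hab
    exact (Nat.pair_eq_pair.mp hab).2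
  · intro j
    intro t
    show (t : ℕ) ∈ (Denumerable.ofNat (Finset ℕ) (Nat.pair code j).unpair.1 : Finset ℕ) ↔ η t = true
    rw [Nat.unpair_pair]
    change (t : ℕ) ∈ (Denumerable.ofNat (Finset ℕ) code : Finset ℕ) ↔ _
    rw [hcode]
    rw [hV]
    simp only [Finset.mem_image, Finset.mem_filter, Finset.mem_univ, true_and]
    constructor
    · rintro ⟨t', ht', hval⟩
      rwa [show t' = t from Fin.val_injective hval] at ht'
    · intro ht
      exact ⟨t, ht, rfl⟩
noncomputable def sgn (b : Bool) (f : L.Formula α) : L.Formula α := if b then f else f.not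

theorem realize_sgn {α : Type} {b : Bool} {f : L.Formula α} {v : α → N} :
    (sgn b f).Realize v ↔ (f.Realize v ↔ b = true) := by
  cases b <;> simp [sgn, Formula.realize_not]

theorem frealize_iInf {β γ : Type} (s : Finset β) (f : β → L.Formula γ) (v : γ → N) :
    Formula.Realize (iInfS s f) v ↔ ∀ b ∈ s, (f b).Realize v := by
  rw [iInfS, Formula.Realize, BoundedFormula.realize_iInf]
  exact ⟨fun h b hb => h ⟨b, hb⟩, fun h b => h b.1 b.2⟩

/-- insert a value at coordinate `k₀` -/
def ins {n : ℕ} (k₀ : Fin (n+1)) (w : Fin n → N) (y : N) : Fin (n+1) → N :=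
  fun k => (finSuccEquiv' k₀ k).elim y w

theorem ins_self {n : ℕ} (k₀ : Fin (n+1)) (v : Fin (n+1) → N) :
    ins k₀ (fun k' => v (k₀.succAbove k')) (v k₀) = v := by
  funext k
  rcases h : finSuccEquiv' k₀ k with _ | k'
  · have hk : k = k₀ := by
      have := congrArg (finSuccEquiv' k₀).symm h
      rwa [Equiv.symm_apply_apply, finSuccEquiv'_symm_none] at this
    rw [ins, h, hk]
    rfl
  · have hk : k = k₀.succAbove k' := by
      have := congrArg (finSuccEquiv' k₀).symm h
      rwa [Equiv.symm_apply_apply, finSuccEquiv'_symm_some] at this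
    rw [ins, h, hk]
    rfl

/-- move the `k₀` variable of `ψ` into a parameter slot -/
noncomputable def gamma {n m : ℕ} (ψ : L.Formula (Fin (n+1) ⊕ Fin m)) (k₀ : Fin (n+1)) :
    L.Formula (Fin n ⊕ (Unit ⊕ Fin m)) :=
  ψ.relabel (fun a => match a with
    | Sum.inl k => (finSuccEquiv' k₀ k).elim (Sum.inr (Sum.inl ())) Sum.inl
    | Sum.inr j => Sum.inr (Sum.inr j))

theorem realize_gamma {n m : ℕ} {ψ : L.Formula (Fin (n+1) ⊕ Fin m)} {k₀ : Fin (n+1)}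
    {w : Fin n → N} {d : Unit ⊕ Fin m → N} :
    (gamma ψ k₀).Realize (Sum.elim w d) ↔
      ψ.Realize (Sum.elim (ins k₀ w (d (Sum.inl ()))) (fun j => d (Sum.inr j))) := by
  rw [gamma, Formula.realize_relabel]
  refine iff_of_eq (congrArg _ (funext fun a => ?_))
  rcases a with k | j
  · rcases h : finSuccEquiv' k₀ k with _ | k' <;>
      simp only [Sum.elim_comp_inl, Function.comp_apply, ins, h, Option.elim_none,
        Option.elim_some, Sum.elim_inl, Sum.elim_inr]
  · rfl

/-- the `χ` formula: `x ∈ P` and there is a `P`-tuple `w` realizing the pattern `η`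
with the `t`-th parameter block, `x` being inserted at `k₀`. -/
noncomputable def XF {n m : ℕ} (pP : L.Formula (Fin 1)) (ψ : L.Formula (Fin (n+1) ⊕ Fin m))
    (k₀ : Fin (n+1)) (Lv : ℕ) (η : Fin Lv → Bool) :
    L.Formula (Fin 1 ⊕ (Fin Lv × Fin m)) :=
  atVar pP (Sum.inl 0) ⊓
  iExsR (γ := Fin n) (id : ((Fin 1 ⊕ (Fin Lv × Fin m)) ⊕ Fin n) →
      ((Fin 1 ⊕ (Fin Lv × Fin m)) ⊕ Fin n))
    (iInfS Finset.univ (fun k' : Fin n => atVar pP (Sum.inr k')) ⊓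
     iInfS Finset.univ (fun t : Fin Lv =>
       sgn (η t) (ψ.relabel (fun a => match a with
         | Sum.inl k => (finSuccEquiv' k₀ k).elim (Sum.inl (Sum.inl 0))
             (fun k' => Sum.inr k')
         | Sum.inr j => Sum.inl (Sum.inr (t, j))))))

theorem realize_XF {P : Set N} {n m : ℕ} {pP : L.Formula (Fin 1)}
    (hpP : ∀ y : N, pP.Realize (fun _ => y) ↔ y ∈ P)
    {ψ : L.Formula (Fin (n+1) ⊕ Fin m)} {k₀ : Fin (n+1)} {Lv : ℕ} {η : Fin Lv → Bool}
    {x : Fin 1 → N} {C : Fin Lv × Fin m → N} :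
    (XF pP ψ k₀ Lv η).Realize (Sum.elim x C) ↔
      x 0 ∈ P ∧ ∃ w : Fin n → N, (∀ k', w k' ∈ P) ∧
        ∀ t : Fin Lv, (ψ.Realize (Sum.elim (ins k₀ w (x 0)) (fun j => C (t, j))) ↔
          η t = true) := by
  rw [XF, Formula.realize_inf, realize_atVar]
  simp only [Sum.elim_inl]
  rw [hpP]
  refine and_congr_right fun _ => ?_
  rw [realize_iExsR]
  refine exists_congr fun w => ?_
  have hval : (fun a => Sum.elim (Sum.elim x C) w (id a)) = Sum.elim (Sum.elim x C) w := by
    funext a; rfl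
  rw [hval, Formula.realize_inf, frealize_iInf, frealize_iInf]
  refine and_congr (by simp [realize_atVar, hpP]) ?_
  refine forall_congr' fun t => ?_
  simp only [Finset.mem_univ, true_implies, forall_const]
  rw [realize_sgn, Formula.realize_relabel]
  have hval2 : (Sum.elim (Sum.elim x C) w ∘ fun a =>
      match a with
      | Sum.inl k => ((finSuccEquiv' k₀) k).elim (Sum.inl (Sum.inl 0)) fun k' => Sum.inr k'
      | Sum.inr j => Sum.inl (Sum.inr (t, j))) =
      Sum.elim (ins k₀ w (x 0)) fun j => C (t, j) := by
    funext a
    rcases a with k | j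
    · rcases hk : finSuccEquiv' k₀ k with _ | k' <;>
        simp only [Function.comp_apply, ins, hk, Option.elim_none, Option.elim_some,
          Sum.elim_inl, Sum.elim_inr]
    · rfl
  rw [hval2]

theorem list_le_foldr_max (l : List ℕ) : ∀ x ∈ l, x ≤ l.foldr max 0 := by
  induction l with
  | nil => intro x hx; cases hx
  | cons a l ih =>
    intro x hx
    rcases List.mem_cons.mp hx with rfl | hx
    · exact le_max_left _ _
    · exact le_trans (ih x hx) (le_max_right _ _)


theorem PF.sat_mk {k m : ℕ} (f : L.Formula (Fin k ⊕ Fin m)) (c : Fin m → N) (x : Fin k → N) :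
    (⟨m, f, c⟩ : PF L N k).Sat x ↔ f.Realize (Sum.elim x c) := Iff.rfl

noncomputable def PF.ofFormula {k : ℕ} {γ : Type} [Fintype γ]
    (f : L.Formula (Fin k ⊕ γ)) (cc : γ → N) : PF L N k :=
  ⟨Fintype.card γ, f.relabel (Sum.map id (Fintype.equivFin γ)),
    cc ∘ (Fintype.equivFin γ).symm⟩

theorem PF.sat_ofFormula {k : ℕ} {γ : Type} [Fintype γ]
    {f : L.Formula (Fin k ⊕ γ)} {cc : γ → N} {x : Fin k → N} :
    (PF.ofFormula f cc).Sat x ↔ f.Realize (Sum.elim x cc) := by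
  rw [PF.ofFormula, PF.sat_mk, Formula.realize_relabel]
  refine iff_of_eq (congrArg _ (funext fun a => ?_))
  rcases a with i | j
  · rfl
  · simp

theorem PF.ofFormula_params {k : ℕ} {γ : Type} [Fintype γ]
    {f : L.Formula (Fin k ⊕ γ)} {cc : γ → N} {A : Set N} (h : ∀ j, cc j ∈ A) :
    ∀ j, (PF.ofFormula f cc).c j ∈ A := fun j => h _

/-- the inductive invariant: a formula whose `Fin n` block of variables ranges over `P`,
with a family of tuples indexed by `ℕ` and parameters realizing every subset of `ℕ`
along the diagonal. -/
def INVd (L : FirstOrder.Language) [L.Structure N] (P : Set N) (n : ℕ) : Prop :=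
  ∃ (m : ℕ) (ψ : L.Formula (Fin n ⊕ Fin m)) (e : ℕ → Fin n → N) (c : Set ℕ → Fin m → N),
    (∀ i k, e i k ∈ P) ∧ ∀ (i : ℕ) (s : Set ℕ), ψ.Realize (Sum.elim (e i) (c s)) ↔ i ∈ s

theorem invd_zero {P : Set N} : ¬ INVd L P 0 := by
  rintro ⟨m, ψ, e, c, -, hdiag⟩
  have h01 : e 0 = e 1 := funext fun i => i.elim0
  have h1 : ψ.Realize (Sum.elim (e 0) (c {0})) := (hdiag 0 {0}).mpr rfl
  rw [h01] at h1
  have h2 : (1 : ℕ) ∈ ({0} : Set ℕ) := (hdiag 1 {0}).mp h1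
  exact one_ne_zero (Set.mem_singleton_iff.mp h2)

/-- Realizing a "limit point" of the chain: a single element of `P` whose fibers are
complete for all patterns over the independent family. -/
theorem exists_xstar (hsat : IsSaturated (N := N) L) (hN : ℵ₀ < #N)
    (homin : ∀ s : Set N, Set.Definable₁ (univ : Set N) L s → s ⊆ P →
      ∃ (k : ℕ) (I : Fin k → Set N), s = ⋃ i, I i ∧ ∀ i,
        (∃ a ∈ P, ∃ b ∈ P, I i = {x ∈ P | lt a x ∧ lt x b}) ∨
        (∃ a ∈ P, I i = {x ∈ P | lt a x}) ∨
        (∃ b ∈ P, I i = {x ∈ P | lt x b}) ∨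
        I i = P ∨
        (∃ a ∈ P, I i = {a}))
    (hirr : ∀ x ∈ P, ¬ lt x x)
    (htrans : ∀ x ∈ P, ∀ y ∈ P, ∀ z ∈ P, lt x y → lt y z → lt x z)
    (pP : L.Formula (Fin 1)) (hpP : ∀ y : N, pP.Realize (fun _ => y) ↔ y ∈ P)
    {n m : ℕ} (ψ : L.Formula (Fin (n+1) ⊕ Fin m)) (k₀ : Fin (n+1))
    (E : ℕ → Fin (n+1) → N) (hEP : ∀ i k, E i k ∈ P)
    (C : Set ℕ → Fin m → N)
    (hdiagE : ∀ i s, ψ.Realize (Sum.elim (E i) (C s)) ↔ i ∈ s)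
    (hmono : (∀ i j, i < j → lt (E i k₀) (E j k₀)) ∨
      (∀ i j, i < j → lt (E j k₀) (E i k₀))) :
    ∃ xs : N, xs ∈ P ∧ ∀ (Lv : ℕ) (η : Fin Lv → Bool), ∃ w : Fin n → N,
      (∀ k', w k' ∈ P) ∧
      ∀ t : Fin Lv, (ψ.Realize (Sum.elim (ins k₀ w xs) (C (indep ↑t))) ↔ η t = true) := by
  classical
  -- the definable sets along the chain
  have hXdef : ∀ (Lv : ℕ) (η : Fin Lv → Bool), Set.Definable₁ (univ : Set N) L
      {y : N | (XF pP ψ k₀ Lv η).Realize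
        (Sum.elim (fun _ : Fin 1 => y) (fun tj : Fin Lv × Fin m => C (indep ↑tj.1) tj.2))} := by
    intro Lv η
    rw [Set.Definable₁]
    have hds := definable_section (univ : Set N) (XF pP ψ k₀ Lv η)
      (fun tj : Fin Lv × Fin m => C (indep ↑tj.1) tj.2) (fun j => mem_univ _)
    convert hds using 1
    ext f
    rw [mem_setOf_eq, mem_setOf_eq, mem_setOf_eq]
    rw [fin1_eq_const f]
  have hXP : ∀ (Lv : ℕ) (η : Fin Lv → Bool),
      {y : N | (XF pP ψ k₀ Lv η).Realize
        (Sum.elim (fun _ : Fin 1 => y) (fun tj : Fin Lv × Fin m => C (indep ↑tj.1) tj.2))} ⊆ P := by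
    intro Lv η y hy
    exact ((realize_XF (P := P) hpP).mp hy).1
  have htail : ∀ (Lv : ℕ) (η : Fin Lv → Bool), ∃ i₀, ∀ i, i₀ ≤ i →
      (XF pP ψ k₀ Lv η).Realize
        (Sum.elim (fun _ : Fin 1 => E i k₀) (fun tj : Fin Lv × Fin m => C (indep ↑tj.1) tj.2)) := by
    intro Lv η
    have hchain := chain_tail homin hirr htrans (fun i => E i k₀) (fun i => hEP i k₀) hmono
      _ (hXdef Lv η) (hXP Lv η) ?_
    · exact hchain
    · refine (indep_infinite Lv η).mono ?_
      intro i hi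
      simp only [Set.mem_setOf_eq]
      rw [realize_XF (P := P) hpP]
      refine ⟨hEP i k₀, fun k' => E i (k₀.succAbove k'), fun k' => hEP _ _, fun t => ?_⟩
      rw [ins_self k₀ (E i)]
      have hCC : (fun j => (fun tj : Fin Lv × Fin m => C (indep ↑tj.1) tj.2) (t, j)) =
        C (indep ↑t) := rfl
      rw [hCC, hdiagE]
      exact hi t
  choose τ hτ using htail
  -- the 1-type of the limit point
  have hA0c : (⋃ t : ℕ, Set.range (C (indep t))).Countable :=
    Set.countable_iUnion (fun t => (Set.finite_range _).countable)
  have hparams : ∀ q ∈ {q : PF L N 1 | ∃ (Lv : ℕ) (η : Fin Lv → Bool),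
      q = PF.ofFormula (XF pP ψ k₀ Lv η) (fun tj : Fin Lv × Fin m => C (indep ↑tj.1) tj.2)},
      ∀ j, q.c j ∈ (⋃ t : ℕ, Set.range (C (indep t))) := by
    rintro q ⟨Lv, η, rfl⟩ j
    refine PF.ofFormula_params ?_ j
    intro tj
    exact Set.mem_iUnion.mpr ⟨(tj.1 : ℕ), ⟨tj.2, rfl⟩⟩
  have hfs : ∀ l : List (PF L N 1), (∀ q ∈ l, q ∈ {q : PF L N 1 | ∃ (Lv : ℕ) (η : Fin Lv → Bool),
      q = PF.ofFormula (XF pP ψ k₀ Lv η) (fun tj : Fin Lv × Fin m => C (indep ↑tj.1) tj.2)}) →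
      ∃ x : N, ∀ q ∈ l, q.Sat (fun _ => x) := by
    intro l hl
    choose FLv Fη hF using fun (r : {r // r ∈ l}) => hl r.1 r.2
    set B : ℕ := (l.attach.map (fun r => τ (FLv r) (Fη r))).foldr max 0 with hB
    refine ⟨E B k₀, fun q hq => ?_⟩
    have hFq : q = PF.ofFormula (XF pP ψ k₀ (FLv ⟨q, hq⟩) (Fη ⟨q, hq⟩))
        (fun tj : Fin (FLv ⟨q, hq⟩) × Fin m => C (indep ↑tj.1) tj.2) := hF ⟨q, hq⟩
    rw [hFq, PF.sat_ofFormula]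
    refine hτ (FLv ⟨q, hq⟩) (Fη ⟨q, hq⟩) B ?_
    exact list_le_foldr_max _ _ (List.mem_map.mpr ⟨⟨q, hq⟩, by simp, rfl⟩)
  obtain ⟨xs, hxs⟩ := sat1 hsat
    (lt_of_le_of_lt (Cardinal.mk_le_aleph0_iff.mpr hA0c.to_subtype) hN) _ hparams hfs
  refine ⟨xs, ?_, ?_⟩
  · have h0 := hxs _ ⟨0, finZeroElim, rfl⟩
    rw [PF.sat_ofFormula, realize_XF (P := P) hpP] at h0
    exact h0.1
  · intro Lv η
    have h1 := hxs _ ⟨Lv, η, rfl⟩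
    rw [PF.sat_ofFormula, realize_XF (P := P) hpP] at h1
    obtain ⟨-, w, hwP, hw⟩ := h1
    exact ⟨w, hwP, fun t => hw t⟩

theorem elim_comp_swap {α β : Type} (f : α → N) (g : β → N) :
    Sum.elim f g ∘ (Sum.swap : β ⊕ α → α ⊕ β) = Sum.elim g f := by
  funext a; rcases a with a | a <;> rfl

noncomputable def pswap {n m : ℕ} (ψ : L.Formula (Fin (n+1) ⊕ Fin m)) (k₀ : Fin (n+1)) :
    L.Formula (Fin n ⊕ Fin (m+1)) :=
  (gamma ψ k₀).relabel (fun a => match a with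
    | Sum.inl k' => Sum.inl k'
    | Sum.inr (Sum.inl _) => Sum.inr (Fin.last m)
    | Sum.inr (Sum.inr jj) => Sum.inr jj.castSucc)

theorem realize_pswap {n m : ℕ} {ψ : L.Formula (Fin (n+1) ⊕ Fin m)} {k₀ : Fin (n+1)}
    {x : Fin n → N} {D : Fin (m+1) → N} :
    (pswap ψ k₀).Realize (Sum.elim x D) ↔
      ψ.Realize (Sum.elim (ins k₀ x (D (Fin.last m))) (fun jj => D jj.castSucc)) := by
  rw [pswap, Formula.realize_relabel]
  have hval : (Sum.elim x D ∘ fun a : Fin n ⊕ (Unit ⊕ Fin m) => match a with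
      | Sum.inl k' => Sum.inl k'
      | Sum.inr (Sum.inl _) => Sum.inr (Fin.last m)
      | Sum.inr (Sum.inr jj) => Sum.inr jj.castSucc) =
      Sum.elim x (Sum.elim (fun _ : Unit => D (Fin.last m)) (fun jj => D jj.castSucc)) := by
    funext a
    rcases a with k' | (u | jj) <;> rfl
  rw [hval, realize_gamma]
  simp only [Sum.elim_inl, Sum.elim_inr]

theorem descent (hsat : IsSaturated (N := N) L)
    (homin : ∀ s : Set N, Set.Definable₁ (univ : Set N) L s → s ⊆ P →
      ∃ (k : ℕ) (I : Fin k → Set N), s = ⋃ i, I i ∧ ∀ i,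
        (∃ a ∈ P, ∃ b ∈ P, I i = {x ∈ P | lt a x ∧ lt x b}) ∨
        (∃ a ∈ P, I i = {x ∈ P | lt a x}) ∨
        (∃ b ∈ P, I i = {x ∈ P | lt x b}) ∨
        I i = P ∨
        (∃ a ∈ P, I i = {a}))
    (hirr : ∀ x ∈ P, ¬ lt x x)
    (htrans : ∀ x ∈ P, ∀ y ∈ P, ∀ z ∈ P, lt x y → lt y z → lt x z)
    (htotal : ∀ x ∈ P, ∀ y ∈ P, lt x y ∨ x = y ∨ lt y x)
    (pP : L.Formula (Fin 1)) (hpP : ∀ y : N, pP.Realize (fun _ => y) ↔ y ∈ P)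
    {n : ℕ} (h : INVd L P (n+1)) : INVd L P n := by
  classical
  obtain ⟨m, ψ, e, c, heP, hdiag⟩ := h
  have heinj : Function.Injective e := by
    intro i j hij
    by_contra hne
    have h1 : ψ.Realize (Sum.elim (e i) (c {i})) := (hdiag i {i}).mpr rfl
    rw [hij] at h1
    exact hne (Set.mem_singleton_iff.mp ((hdiag j {i}).mp h1)).symm
  have hcinj : Function.Injective c := by
    intro s s' hss
    ext i
    have h1 := hdiag i s
    have h2 := hdiag i s'
    rw [hss] at h1
    rw [← h1, h2]
  have hN : ℵ₀ < #N := by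
    by_contra hle
    push_neg at hle
    have hcount : Countable N := Cardinal.mk_le_aleph0_iff.mp hle
    have hchain : (2 : Cardinal) ^ (ℵ₀ : Cardinal) ≤ ℵ₀ := by
      calc (2 : Cardinal) ^ (ℵ₀ : Cardinal) = #(Set ℕ) := by
            rw [Cardinal.mk_set, Cardinal.mk_nat]
        _ ≤ #(Fin m → N) := Cardinal.mk_le_of_injective hcinj
        _ ≤ ℵ₀ := Cardinal.mk_le_aleph0
    exact absurd hchain (not_le.mpr (Cardinal.cantor _))
  obtain ⟨k₀, σ, hσinj, hσmono⟩ := exists_coord_chain htrans htotal e heP heinj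
  have hdiagE : ∀ (i : ℕ) (s : Set ℕ),
      ψ.Realize (Sum.elim ((fun i => e (σ i)) i) ((fun s => c (σ '' s)) s)) ↔ i ∈ s := by
    intro i s
    rw [hdiag, hσinj.mem_set_image]
  obtain ⟨xs, hxsP, hstar⟩ := exists_xstar hsat hN homin hirr htrans pP hpP ψ k₀
    (fun i => e (σ i)) (fun i k => heP (σ i) k) (fun s => c (σ '' s)) hdiagE hσmono
  -- stage 2 : realize the new tuples
  have hstage2 : ∀ j : ℕ, ∃ w : Fin n → N, (∀ k', w k' ∈ P) ∧
      ∀ t : ℕ, (ψ.Realize (Sum.elim (ins k₀ w xs) (c (σ '' indep t))) ↔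
        (decide (j ∈ (Denumerable.ofNat (Finset ℕ) t : Finset ℕ)) = true)) := by
    intro j
    set pj : Set (PF L N n) := {q | (∃ k' : Fin n, q = PF.ofFormula (γ := Fin 0)
        (atVar pP (Sum.inl k')) finZeroElim) ∨
      ∃ t : ℕ, q = PF.ofFormula (γ := Unit ⊕ Fin m)
        (sgn (decide (j ∈ (Denumerable.ofNat (Finset ℕ) t : Finset ℕ))) (gamma ψ k₀))
        (Sum.elim (fun _ : Unit => xs) (c (σ '' indep t)))} with hpj
    have hcnt : (({xs} : Set N) ∪ ⋃ t : ℕ, Set.range (c (σ '' indep t))).Countable :=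
      (Set.countable_singleton xs).union
        (Set.countable_iUnion (fun t => (Set.finite_range _).countable))
    have hparj : ∀ q ∈ pj, ∀ jj, q.c jj ∈
        (({xs} : Set N) ∪ ⋃ t : ℕ, Set.range (c (σ '' indep t))) := by
      rintro q (⟨k', rfl⟩ | ⟨t, rfl⟩) jj
      · exact (((Fintype.equivFin (Fin 0)).symm jj).elim0 : _)
      · refine PF.ofFormula_params ?_ jj
        rintro (u | j')
        · exact Or.inl rfl
        · exact Or.inr (Set.mem_iUnion.mpr ⟨t, ⟨j', rfl⟩⟩)
    have hfinj : ∀ l : List (PF L N n), (∀ q ∈ l, q ∈ pj) →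
        ∃ x : Fin n → N, ∀ q ∈ l, q.Sat x := by
      intro l hl
      set tOf : {r // r ∈ l} → ℕ := fun r =>
        if h : ∃ t : ℕ, r.1 = PF.ofFormula (γ := Unit ⊕ Fin m)
          (sgn (decide (j ∈ (Denumerable.ofNat (Finset ℕ) t : Finset ℕ))) (gamma ψ k₀))
          (Sum.elim (fun _ : Unit => xs) (c (σ '' indep t))) then h.choose else 0 with htOf
      set Tm : ℕ := ((l.attach.map tOf).foldr max 0) + 1 with hTm
      obtain ⟨w, hwP, hwt⟩ := hstar Tm
        (fun t : Fin Tm => decide (j ∈ (Denumerable.ofNat (Finset ℕ) (t : ℕ) : Finset ℕ)))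
      refine ⟨w, fun q hq => ?_⟩
      rcases hl q hq with ⟨k', rfl⟩ | ⟨t, hqt⟩
      · rw [PF.sat_ofFormula, realize_atVar]
        have hmem : Sum.elim w finZeroElim (Sum.inl k') ∈ P := hwP k'
        rw [hpP]
        exact hmem
      · have hex : ∃ t : ℕ, q = PF.ofFormula (γ := Unit ⊕ Fin m)
          (sgn (decide (j ∈ (Denumerable.ofNat (Finset ℕ) t : Finset ℕ))) (gamma ψ k₀))
          (Sum.elim (fun _ : Unit => xs) (c (σ '' indep t))) := ⟨t, hqt⟩
        have ht'd : tOf ⟨q, hq⟩ = hex.choose := by rw [htOf]; exact dif_pos hex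
        have hq' : q = PF.ofFormula (γ := Unit ⊕ Fin m)
          (sgn (decide (j ∈ (Denumerable.ofNat (Finset ℕ) (tOf ⟨q, hq⟩) : Finset ℕ)))
            (gamma ψ k₀))
          (Sum.elim (fun _ : Unit => xs) (c (σ '' indep (tOf ⟨q, hq⟩)))) := by
          rw [ht'd]; exact hex.choose_spec
        have hlt : tOf ⟨q, hq⟩ < Tm := Nat.lt_succ_of_le
          (list_le_foldr_max _ _ (List.mem_map.mpr ⟨⟨q, hq⟩, by simp, rfl⟩))
        rw [hq', PF.sat_ofFormula, realize_sgn, realize_gamma]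
        have hw2 := hwt ⟨tOf ⟨q, hq⟩, hlt⟩
        exact hw2
    obtain ⟨w, hw⟩ := satk hsat hN n _ hcnt pj hparj hfinj
    refine ⟨w, fun k' => ?_, fun t => ?_⟩
    · have hx1 := hw _ (Or.inl ⟨k', rfl⟩)
      rw [PF.sat_ofFormula, realize_atVar, hpP] at hx1
      exact hx1
    · have hx2 := hw _ (Or.inr ⟨t, rfl⟩)
      rw [PF.sat_ofFormula, realize_sgn, realize_gamma] at hx2
      exact hx2
  choose e' hP' hprop using hstage2
  -- stage 3 : realize the new parameters
  have hstage3 : ∀ u : Set ℕ, ∃ D : Fin (m+1) → N, ∀ j : ℕ,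
      ((pswap ψ k₀).Realize (Sum.elim (e' j) D) ↔ j ∈ u) := by
    intro u
    set pu : Set (PF L N (m+1)) := {q | ∃ j : ℕ, q = PF.ofFormula (γ := Fin n)
        (sgn (decide (j ∈ u)) ((pswap ψ k₀).relabel Sum.swap)) (e' j)} with hpu
    have hcnt : (⋃ j : ℕ, Set.range (e' j)).Countable :=
      Set.countable_iUnion (fun j => (Set.finite_range _).countable)
    have hparu : ∀ q ∈ pu, ∀ jj, q.c jj ∈ (⋃ j : ℕ, Set.range (e' j)) := by
      rintro q ⟨j, rfl⟩ jj
      refine PF.ofFormula_params ?_ jj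
      intro k'
      exact Set.mem_iUnion.mpr ⟨j, ⟨k', rfl⟩⟩
    have hfinu : ∀ l : List (PF L N (m+1)), (∀ q ∈ l, q ∈ pu) →
        ∃ x : Fin (m+1) → N, ∀ q ∈ l, q.Sat x := by
      intro l hl
      set jOf : {r // r ∈ l} → ℕ := fun r =>
        if h : ∃ j : ℕ, r.1 = PF.ofFormula (γ := Fin n)
          (sgn (decide (j ∈ u)) ((pswap ψ k₀).relabel Sum.swap)) (e' j)
        then h.choose else 0 with hjOf
      set J : Finset ℕ := (l.attach.map jOf).toFinset with hJ
      set V : Finset ℕ := J.filter (fun j => j ∈ u) with hV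
      obtain ⟨tV, htV⟩ : ∃ t, (Denumerable.ofNat (Finset ℕ) t : Finset ℕ) = V :=
        ⟨_, Denumerable.ofNat_encode V⟩
      refine ⟨Fin.snoc (c (σ '' indep tV)) xs, fun q hq => ?_⟩
      have hex : ∃ j : ℕ, q = PF.ofFormula (γ := Fin n)
          (sgn (decide (j ∈ u)) ((pswap ψ k₀).relabel Sum.swap)) (e' j) := hl q hq
      have hj'd : jOf ⟨q, hq⟩ = hex.choose := by rw [hjOf]; exact dif_pos hex
      have hq' : q = PF.ofFormula (γ := Fin n)
          (sgn (decide ((jOf ⟨q, hq⟩) ∈ u)) ((pswap ψ k₀).relabel Sum.swap))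
          (e' (jOf ⟨q, hq⟩)) := by
        rw [hj'd]; exact hex.choose_spec
      have hjJ : jOf ⟨q, hq⟩ ∈ J := by
        rw [hJ]
        exact List.mem_toFinset.mpr (List.mem_map.mpr ⟨⟨q, hq⟩, by simp, rfl⟩)
      rw [hq', PF.sat_ofFormula, realize_sgn, Formula.realize_relabel, elim_comp_swap,
        realize_pswap]
      have hD1 : (Fin.snoc (α := fun _ => N) (c (σ '' indep tV)) xs) (Fin.last m) = xs :=
        Fin.snoc_last _ _
      have hD2 : (fun jj : Fin m => (Fin.snoc (α := fun _ => N) (c (σ '' indep tV)) xs)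
          jj.castSucc) = c (σ '' indep tV) := by
        funext jj; exact Fin.snoc_castSucc _ _ _
      rw [hD1, hD2]
      rw [hprop (jOf ⟨q, hq⟩) tV, htV]
      simp only [decide_eq_true_eq]
      rw [hV]
      simp only [Finset.mem_filter]
      exact ⟨fun hh => hh.2, fun hh => ⟨hjJ, hh⟩⟩
    obtain ⟨D, hD⟩ := satk hsat hN (m+1) _ hcnt pu hparu hfinu
    refine ⟨D, fun j => ?_⟩
    have hj := hD _ ⟨j, rfl⟩
    rw [PF.sat_ofFormula, realize_sgn, Formula.realize_relabel, elim_comp_swap] at hj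
    rw [hj]
    simp
  choose cD hcD using hstage3
  exact ⟨m + 1, pswap ψ k₀, e', cD, hP', fun i s => hcD s i⟩


theorem ose_proof
    (hPdef : Set.Definable₁ (∅ : Set N) L P)
    (homin : ∀ s : Set N, Set.Definable₁ (univ : Set N) L s → s ⊆ P →
      ∃ (k : ℕ) (I : Fin k → Set N), s = ⋃ i, I i ∧ ∀ i,
        (∃ a ∈ P, ∃ b ∈ P, I i = {x ∈ P | lt a x ∧ lt x b}) ∨
        (∃ a ∈ P, I i = {x ∈ P | lt a x}) ∨
        (∃ b ∈ P, I i = {x ∈ P | lt x b}) ∨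
        I i = P ∨
        (∃ a ∈ P, I i = {a}))
    (pP : L.Formula (Fin 1)) (hpP : ∀ x : N, (pP.Realize (fun _ => x)) ↔ x ∈ P)
    (plt : L.Formula (Fin 2)) (hplt : ∀ x y : N, (plt.Realize ![x, y]) ↔ lt x y) :
    ∀ s : Set (Fin 1 → N), (univ : Set N).Definable L s →
    (∀ f ∈ s, ∀ i, f i ∈ P) → P.Definable L s := by
  intro s hs hsP
  set t : Set N := {x : N | (fun _ : Fin 1 => x) ∈ s} with ht
  have hst : s = {f : Fin 1 → N | f 0 ∈ t} := by
    ext f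
    rw [mem_setOf_eq, ht, mem_setOf_eq, ← fin1_eq_const f]
  have htdef : Set.Definable₁ (univ : Set N) L t := by
    rw [Set.Definable₁]
    convert hs using 1
    exact hst.symm
  have htP : t ⊆ P := fun x hx => hsP _ hx 0
  obtain ⟨k, I, hU, hshape⟩ := homin t htdef htP
  have hsU : s = ⋃ i ∈ (Finset.univ : Finset (Fin k)), {f : Fin 1 → N | f 0 ∈ I i} := by
    rw [hst, hU]
    ext f
    simp
  rw [hsU]
  exact Set.definable_biUnion_finset
    (fun i => shape_definable pP hpP plt hplt (I i) (hshape i)) _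

end Aux

/-- **Remark 1.2(ii).**  Let `T` be a complete theory, `N` a saturated model of `T`, and
`P` a `∅`-definable set in `N` equipped with a distinguished `∅`-definable total ordering
`<`.  If `P` is o-minimal in `N`, then `P` is 1-stably embedded in `N` and `P` has NIP
in `N`. -/
theorem oneStablyEmbedded_and_hasNIPIn_of_oMinimal
    (hsat : IsSaturated (N := N) L) (P : Set N)
    (hPdef : Set.Definable₁ (∅ : Set N) L P)
    (lt : N → N → Prop)
    (hltdef : Set.Definable (∅ : Set N) L {v : Fin 2 → N | lt (v 0) (v 1)})
    (hirr : ∀ x ∈ P, ¬ lt x x)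
    (htrans : ∀ x ∈ P, ∀ y ∈ P, ∀ z ∈ P, lt x y → lt y z → lt x z)
    (htotal : ∀ x ∈ P, ∀ y ∈ P, lt x y ∨ x = y ∨ lt y x)
    (homin : OMinimalIn L P lt) :
    OneStablyEmbedded L P ∧ HasNIPIn L P := by
  classical
  have hPdef' : (∅ : Set N).Definable L {x : Fin 1 → N | x 0 ∈ P} := hPdef
  have homin' : ∀ s : Set N, Set.Definable₁ (univ : Set N) L s → s ⊆ P →
      ∃ (k : ℕ) (I : Fin k → Set N), s = ⋃ i, I i ∧ ∀ i,
        (∃ a ∈ P, ∃ b ∈ P, I i = {x ∈ P | lt a x ∧ lt x b}) ∨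
        (∃ a ∈ P, I i = {x ∈ P | lt a x}) ∨
        (∃ b ∈ P, I i = {x ∈ P | lt x b}) ∨
        I i = P ∨
        (∃ a ∈ P, I i = {a}) := homin
  obtain ⟨pP, hpPs⟩ := Set.empty_definable_iff.mp hPdef'
  have hpP : ∀ y : N, pP.Realize (fun _ => y) ↔ y ∈ P := by
    intro y
    constructor
    · intro hr
      have h2 : (fun _ : Fin 1 => y) ∈ {x : Fin 1 → N | x 0 ∈ P} := by
        rw [hpPs]; exact hr
      exact h2
    · intro hy
      have h2 : (fun _ : Fin 1 => y) ∈ {x : Fin 1 → N | x 0 ∈ P} := hy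
      rw [hpPs] at h2
      exact h2
  obtain ⟨plt, hplts⟩ := Set.empty_definable_iff.mp hltdef
  have hplt : ∀ x y : N, plt.Realize ![x, y] ↔ lt x y := by
    intro x y
    constructor
    · intro hr
      have h2 : (![x, y] : Fin 2 → N) ∈ {v : Fin 2 → N | lt (v 0) (v 1)} := by
        rw [hplts]; exact hr
      simpa using h2
    · intro hl
      have h2 : (![x, y] : Fin 2 → N) ∈ {v : Fin 2 → N | lt (v 0) (v 1)} := by
        simpa using hl
      rw [hplts] at h2
      exact h2
  constructor
  · exact ose_proof hPdef homin' pP hpP plt hplt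
  · rintro ⟨n, m, φ, a, b, haP, hiff⟩
    have hkill : ∀ k : ℕ, ¬ INVd L P k := by
      intro k
      induction k with
      | zero => exact invd_zero
      | succ k ih => exact fun hI => ih (descent hsat homin' hirr htrans htotal pP hpP hI)
    exact hkill n ⟨m, φ, a, b, haP, hiff⟩


end StablyEmbeddedPaper
end

section
/- Let T be a complete theory, N a saturated model of T, and P a ∅-definable set in N which is 1-stably embedded in N and such that every definable (with parameters in N) function from P to a sort Z of 𝒫^eq is coded in P. Then for every n, every subset of P^n definable in N with parameters is coded in P; that is, P is stably embedded in N. (This is the inductive step deducing Theorem 1.4 from Proposition 3.1: if X ⊆ P^{n+1} is definable in N and every definable subset of P^n is coded in P, then using a uniform formula ψ(x_1,…,x_n,z) over a sort Z of 𝒫^eq and the definable function a ↦ c_a assigning to a ∈ P the canonical parameter of the fiber X_a ⊆ P^n, the set X is coded in P.) -/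
/-!
Formalization of notions and results from A. Pillay,
"Stable embeddedness and NIP" (arXiv:1001.0515).

Conventions: we work in a model `N` of the complete theory `T = Th(N)`
(`N` will be assumed saturated in the theorems below), and `P` is a
`∅`-definable subset of `N`.  "Definable" means definable with parameters
(`Set.Definable` over the parameter set).  Tuples of elements of `N` are used
to represent elements of `N^eq` (every imaginary is the image of a real tuple
under a `∅`-definable map, so this does not change the notions below).
The induced structure `𝒫` on `P` has as basic relations all subsets of the
`Pⁿ` that are `∅`-definable in `N`; its imaginaries (`𝒫^eq`) are represented
by `∅`-definable equivalence relations on tuples from `P` together with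
representatives.
-/

open FirstOrder Language Set Cardinal

namespace StablyEmbeddedPaper

variable {L : FirstOrder.Language} {N : Type} [L.Structure N]



/-! ### Sorts of `𝒫^eq` and imaginaries -/

/-- A sort `Z` of `𝒫^eq`: a `∅`-definable (in `N`) equivalence relation on `n`-tuples
from `P`.  Elements of the sort are the equivalence classes. -/
structure EqRel (L : FirstOrder.Language) (N : Type) [L.Structure N] (P : Set N) where
  n : ℕ
  rel : Set ((Fin n ⊕ Fin n) → N)
  definable : Set.Definable (∅ : Set N) L rel
  mem_P : ∀ g ∈ rel, ∀ i, g i ∈ P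
  refl : ∀ f : Fin n → N, (∀ i, f i ∈ P) → Sum.elim f f ∈ rel
  symm : ∀ f g : Fin n → N, Sum.elim f g ∈ rel → Sum.elim g f ∈ rel
  trans : ∀ f g h : Fin n → N, Sum.elim f g ∈ rel → Sum.elim g h ∈ rel → Sum.elim f h ∈ rel

/-- An element of `𝒫^eq`: an element of the sort `E`, given by a representative
tuple from `P` (the element itself is the `E`-class of the representative). -/
structure Imag (L : FirstOrder.Language) (N : Type) [L.Structure N] (P : Set N) where
  E : EqRel L N P
  rep : Fin E.n → N
  repP : ∀ i, rep i ∈ P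

variable {P : Set N}

/-- Two representatives define the same element of `𝒫^eq`. -/
def Imag.eqv (a b : Imag L N P) : Prop :=
  ∃ h : a.E = b.E, Sum.elim a.rep (fun i => b.rep (Fin.cast (congrArg EqRel.n h) i)) ∈ a.E.rel

/-- An automorphism of the induced structure `𝒫`: a permutation of `P` preserving all
relations of `𝒫`, i.e. all subsets of the `Pⁿ` that are `∅`-definable in `N`. -/
def IsPAut (L : FirstOrder.Language) [L.Structure N] (P : Set N) (σ : ↥P ≃ ↥P) : Prop :=
  ∀ (n : ℕ) (s : Set (Fin n → N)), Set.Definable (∅ : Set N) L s →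
    ∀ f : Fin n → ↥P, ((fun i => (f i : N)) ∈ s ↔ (fun i => (σ (f i) : N)) ∈ s)

/-- The action of an automorphism of `𝒫` on imaginaries. -/
def Imag.map (σ : ↥P ≃ ↥P) (a : Imag L N P) : Imag L N P :=
  ⟨a.E, fun i => (σ ⟨a.rep i, a.repP i⟩ : N), fun i => (σ ⟨a.rep i, a.repP i⟩).2⟩

/-- `σ` fixes each imaginary in `B` (as an equivalence class). -/
def FixesImagSet (σ : ↥P ≃ ↥P) (B : Set (Imag L N P)) : Prop :=
  ∀ b ∈ B, (Imag.map σ b).eqv b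

/-- `σ` fixes the set `A ⊆ P` pointwise. -/
def FixesPointwise (σ : ↥P ≃ ↥P) (A : Set N) : Prop :=
  ∀ x : ↥P, (x : N) ∈ A → σ x = x

/-- The imaginary `a` is algebraic over the set `B` of imaginaries: its orbit under the
automorphisms of `𝒫` fixing `B` is finite.  (In the saturated structure `𝒫` this is
equivalent to the usual formula-theoretic definition of `acl` in `𝒫^eq`.) -/
def AclImag (L : FirstOrder.Language) [L.Structure N] (P : Set N) (B : Set (Imag L N P))
    (a : Imag L N P) : Prop :=
  ∃ l : List (Imag L N P), ∀ σ : ↥P ≃ ↥P, IsPAut L P σ → FixesImagSet σ B →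
    ∃ a' ∈ l, (Imag.map σ a).eqv a'

/-- The imaginary `a` is definable over the set `B` of imaginaries: it is fixed by every
automorphism of `𝒫` fixing `B`. -/
def DclImag (L : FirstOrder.Language) [L.Structure N] (P : Set N) (B : Set (Imag L N P))
    (a : Imag L N P) : Prop :=
  ∀ σ : ↥P ≃ ↥P, IsPAut L P σ → FixesImagSet σ B → (Imag.map σ a).eqv a

/-- Two finite tuples of imaginaries have the same type over `B` (in the saturated,
strongly homogeneous structure `𝒫`): some automorphism of `𝒫` fixing `B` carries
one to the other. -/
def SameTypeListOver (L : FirstOrder.Language) [L.Structure N] (P : Set N)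
    (B : Set (Imag L N P)) (l l' : List (Imag L N P)) : Prop :=
  ∃ σ : ↥P ≃ ↥P, IsPAut L P σ ∧ FixesImagSet σ B ∧
    List.Forall₂ Imag.eqv (l.map (Imag.map σ)) l'

/-- The trivial sort: `P` itself, i.e. `1`-tuples from `P` modulo equality. -/
def elemEqRel (L : FirstOrder.Language) [L.Structure N] {P : Set N}
    (hP : Set.Definable₁ (∅ : Set N) L P) : EqRel L N P where
  n := 1
  rel := {g | g (Sum.inl 0) = g (Sum.inr 0) ∧ g (Sum.inl 0) ∈ P}
  definable := by
    have e1 : Set.Definable (∅ : Set N) L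
        {g : (Fin 1 ⊕ Fin 1) → N | g (Sum.inl 0) = g (Sum.inr 0)} :=
      ⟨Term.equal (Term.var (Sum.inl 0)) (Term.var (Sum.inr 0)), by ext g; simp⟩
    have e2 := hP.preimage_comp (fun _ : Fin 1 => (Sum.inl 0 : Fin 1 ⊕ Fin 1))
    have he : {g : (Fin 1 ⊕ Fin 1) → N | g (Sum.inl 0) = g (Sum.inr 0) ∧ g (Sum.inl 0) ∈ P} =
        {g : (Fin 1 ⊕ Fin 1) → N | g (Sum.inl 0) = g (Sum.inr 0)} ∩
        ((fun g : (Fin 1 ⊕ Fin 1) → N =>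
          g ∘ (fun _ : Fin 1 => (Sum.inl 0 : Fin 1 ⊕ Fin 1))) ⁻¹'
            {x : Fin 1 → N | x 0 ∈ P}) := by
      ext g
      simp [Set.mem_preimage, Function.comp]
    rw [he]
    exact e1.inter e2
  mem_P := by
    rintro g ⟨heq, hmem⟩ i
    rcases i with i | i
    · rwa [Subsingleton.elim i 0]
    · rw [Subsingleton.elim i 0, ← heq]; exact hmem
  refl := fun f hf => ⟨rfl, hf 0⟩
  symm := fun f g hfg => ⟨hfg.1.symm, hfg.1 ▸ hfg.2⟩
  trans := fun f g h h1 h2 => ⟨h1.1.trans h2.1, h1.2⟩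

/-- A (real) element of `P`, regarded as an imaginary. -/
def Imag.ofElem (hP : Set.Definable₁ (∅ : Set N) L P) (x : N) (hx : x ∈ P) : Imag L N P :=
  ⟨elemEqRel L hP, fun _ => x, fun _ => hx⟩

/-- A subset of `P`, regarded as a set of imaginaries. -/
def ofElemSet (hP : Set.Definable₁ (∅ : Set N) L P) (A : Set N) (hA : A ⊆ P) :
    Set (Imag L N P) :=
  {i | ∃ (x : N) (hx : x ∈ A), i = Imag.ofElem hP x (hA hx)}

/-! ### Finite rank (Definition 1.3) -/

/-- Th(`𝒫`) has *finite rank*: an assignment of a nonnegative integer `rk(ā/B)` to each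
finite tuple `ā` of imaginaries and each set `B` of imaginaries, depending only on
`tp(ā, B)`, which is additive and symmetric on pairs, vanishes exactly on algebraic
elements, admits rank-preserving nonforking extensions, and is bounded on each sort. -/
structure FiniteRankData (L : FirstOrder.Language) (N : Type) [L.Structure N] (P : Set N) where
  rk : List (Imag L N P) → Set (Imag L N P) → ℕ
  /-- `rk` is well defined on equivalence classes of representatives. -/
  rk_congr : ∀ l l' B, List.Forall₂ Imag.eqv l l' → rk l B = rk l' B
  /-- `rk(ā/B)` depends only on `tp(ā, B)`: it is invariant under automorphisms of `𝒫`. -/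
  rk_invariant : ∀ σ : ↥P ≃ ↥P, IsPAut L P σ → ∀ l B,
    rk (l.map (Imag.map σ)) (Imag.map σ '' B) = rk l B
  /-- (i) `rk(a,b/C) = rk(b,a/C)`. -/
  rk_symm : ∀ a b C, rk [a, b] C = rk [b, a] C
  /-- (i) `rk(a,b/C) = rk(a/b,C) + rk(b/C)`. -/
  rk_add : ∀ a b C, rk [a, b] C = rk [a] (insert b C) + rk [b] C
  /-- (ii) `rk(a/B) = 0` iff `a ∈ acl(B)`. -/
  rk_zero_iff : ∀ a B, rk [a] B = 0 ↔ AclImag L P B a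
  /-- (iii) every type has a rank-preserving extension to any larger parameter set. -/
  rk_ext : ∀ l B C, B ⊆ C → ∃ l', SameTypeListOver L P B l' l ∧ rk l' C = rk l B
  /-- (iv) on each sort of `𝒫^eq` the rank is bounded. -/
  rk_bounded : ∀ Z : EqRel L N P, ∃ k : ℕ, ∀ a : Imag L N P, a.E = Z → rk [a] ∅ ≤ k

/-! ### Types, indiscernibles and forking inside the induced structure `𝒫` -/

/-- Two tuples from `P` have the same type in the induced structure `𝒫` over `A ⊆ P`:
the formulas of `𝒫` are (interpreted by) the subsets of the `Pⁿ` that are `∅`-definable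
in `N`. -/
def SameTypePOver (L : FirstOrder.Language) [L.Structure N] (A : Set N) {α : Type}
    (a a' : α → N) : Prop :=
  ∀ (m : ℕ) (D : Set ((α ⊕ Fin m) → N)), Set.Definable (∅ : Set N) L D →
    ∀ b : Fin m → N, (∀ i, b i ∈ A) → (Sum.elim a b ∈ D ↔ Sum.elim a' b ∈ D)

/-- A sequence of tuples from `P` is indiscernible over `A` in the structure `𝒫`. -/
def IndiscernibleOverP (L : FirstOrder.Language) [L.Structure N] (A : Set N) {m : ℕ}
    (bs : ℕ → Fin m → N) : Prop :=
  ∀ (n : ℕ) (f g : Fin n → ℕ), StrictMono f → StrictMono g →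
    SameTypePOver L A (fun p : Fin n × Fin m => bs (f p.1) p.2)
      (fun p : Fin n × Fin m => bs (g p.1) p.2)

/-- The formula (of `𝒫`) `D(x, b)` divides over `A` in `𝒫`: there is an `A`-indiscernible
sequence `(bᵢ)` in `𝒫` with `b₀ = b` such that `{D(x, bᵢ) : i < ω}` is inconsistent. -/
def DividesP (L : FirstOrder.Language) [L.Structure N] (P : Set N) {α : Type} {m : ℕ}
    (D : Set ((α ⊕ Fin m) → N)) (b : Fin m → N) (A : Set N) : Prop :=
  Set.Definable (∅ : Set N) L D ∧ (∀ i, b i ∈ P) ∧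
  ∃ bs : ℕ → Fin m → N, bs 0 = b ∧ (∀ i j, bs i j ∈ P) ∧ IndiscernibleOverP L A bs ∧
    ∃ F : Finset ℕ, ¬ ∃ x : α → N, (∀ i, x i ∈ P) ∧ ∀ i ∈ F, Sum.elim x (bs i) ∈ D

/-- A definable (in `𝒫`) set forks over `A`: it implies a finite disjunction of formulas
of `𝒫`, each of which divides over `A`. -/
def SetForksOverP (L : FirstOrder.Language) [L.Structure N] (P : Set N) {α : Type}
    (s : Set (α → N)) (A : Set N) : Prop :=
  ∃ (J : ℕ) (m : Fin J → ℕ) (D : ∀ j, Set ((α ⊕ Fin (m j)) → N)) (b : ∀ j, Fin (m j) → N),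
    (∀ j, DividesP L P (D j) (b j) A) ∧ ∀ x ∈ s, ∃ j, Sum.elim x (b j) ∈ D j

/-- The index type for the concatenation of the representatives of a finite tuple of
imaginaries. -/
def repIndex (c : List (Imag L N P)) : Type := Σ i : Fin c.length, Fin (c.get i).E.n

/-- The concatenated representatives of a finite tuple of imaginaries. -/
def reps (c : List (Imag L N P)) : repIndex c → N := fun p => (c.get p.1).rep p.2

/-- `D` (a formula of `𝒫` whose second block of variables stands for representatives of
the imaginaries `c`) is invariant under replacing representatives by equivalent ones; i.e.
it genuinely has the tuple of imaginaries `c` as its parameters. -/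
def RespectsImags {α : Type} (c : List (Imag L N P)) (D : Set ((α ⊕ repIndex c) → N)) : Prop :=
  ∀ (x : α → N) (s s' : repIndex c → N),
    (∀ i : Fin c.length, Sum.elim (fun j => s ⟨i, j⟩) (fun j => s' ⟨i, j⟩) ∈ (c.get i).E.rel) →
    (Sum.elim x s ∈ D ↔ Sum.elim x s' ∈ D)

/-- `tp(a/M₀c)` forks over `M₀` in the structure `𝒫`, where `c` is a finite tuple of
imaginaries: some formula over `M₀c` satisfied by `a` implies a finite disjunction of
formulas each dividing over `M₀`. -/
def TypeForksOverPImag (L : FirstOrder.Language) [L.Structure N] (P : Set N) (a : N)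
    (M₀ : Set N) (c : List (Imag L N P)) : Prop :=
  ∃ (m : ℕ) (D : Set (((Fin 1 ⊕ Fin m) ⊕ repIndex c) → N)) (b : Fin m → N),
    Set.Definable (∅ : Set N) L D ∧ RespectsImags c D ∧ (∀ i, b i ∈ M₀) ∧
    Sum.elim (Sum.elim (fun _ => a) b) (reps c) ∈ D ∧
    SetForksOverP L P {x : Fin 1 → N | x 0 ∈ P ∧ Sum.elim (Sum.elim x b) (reps c) ∈ D} M₀

/-! ### Definable functions into a sort of `𝒫^eq` -/

/-- A function `f : P → Z` (for `Z` a sort of `𝒫^eq`) definable in `N` with parameters,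
presented by its graph `{(x, r) : r is a representative of f(x)}`. -/
structure DefFnToSort (L : FirstOrder.Language) [L.Structure N] (P : Set N)
    (Z : EqRel L N P) where
  graph : Set ((Fin 1 ⊕ Fin Z.n) → N)
  definable : (univ : Set N).Definable L graph
  dom : ∀ g ∈ graph, g (Sum.inl 0) ∈ P ∧ ∀ j, g (Sum.inr j) ∈ P
  total : ∀ x ∈ P, ∃ r : Fin Z.n → N, Sum.elim (fun _ => x) r ∈ graph
  functional : ∀ (x : N) (r r' : Fin Z.n → N), Sum.elim (fun _ => x) r ∈ graph →
    Sum.elim (fun _ => x) r' ∈ graph → Sum.elim r r' ∈ Z.rel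
  saturated : ∀ (x : N) (r r' : Fin Z.n → N), Sum.elim (fun _ => x) r ∈ graph →
    Sum.elim r r' ∈ Z.rel → Sum.elim (fun _ => x) r' ∈ graph

/-- A relation `R(x, z)` between `P` and the sort `Z` is well defined on `Z`-classes. -/
def RespectsZ (Z : EqRel L N P) (R : Set ((Fin 1 ⊕ Fin Z.n) → N)) : Prop :=
  ∀ (x : N) (r r' : Fin Z.n → N), Sum.elim r r' ∈ Z.rel →
    (Sum.elim (fun _ => x) r ∈ R ↔ Sum.elim (fun _ => x) r' ∈ R)

/-- The conclusion of Lemma 3.2: `R(x,z)` is a relation between `P` and the sort `Z`,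
definable in `N` with parameters from `P`, such that
`N ⊨ (∀ x ∈ P)(R(x, f(x)) ∧ (∃^{≤k} z ∈ Z) R(x, z))`. -/
def IsKApprox (L : FirstOrder.Language) [L.Structure N] (P : Set N) (Z : EqRel L N P)
    (f : DefFnToSort L P Z) (R : Set ((Fin 1 ⊕ Fin Z.n) → N)) (k : ℕ) : Prop :=
  P.Definable L R ∧
  (∀ g ∈ R, g (Sum.inl 0) ∈ P ∧ ∀ j, g (Sum.inr j) ∈ P) ∧
  RespectsZ Z R ∧
  (∀ x ∈ P, ∀ r : Fin Z.n → N, Sum.elim (fun _ => x) r ∈ f.graph →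
    Sum.elim (fun _ => x) r ∈ R) ∧
  (∀ x ∈ P, ∃ t : Fin k → Fin Z.n → N, (∀ i j, t i j ∈ P) ∧
    ∀ r : Fin Z.n → N, Sum.elim (fun _ => x) r ∈ R → ∃ i, Sum.elim r (t i) ∈ Z.rel)

/-- `M₀` is a (small) elementary substructure of the induced structure `𝒫`
(Tarski–Vaught test with respect to all `∅`-definable relations). -/
def ElemSubP (L : FirstOrder.Language) [L.Structure N] (P M₀ : Set N) : Prop :=
  M₀ ⊆ P ∧ M₀.Nonempty ∧
  ∀ (k : ℕ) (D : Set ((Fin 1 ⊕ Fin k) → N)), Set.Definable (∅ : Set N) L D →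
    ∀ b : Fin k → N, (∀ i, b i ∈ M₀) →
      (∃ x ∈ P, Sum.elim (fun _ => x) b ∈ D) → ∃ x ∈ M₀, Sum.elim (fun _ => x) b ∈ D



/-! ### Auxiliary definability lemmas and the inductive-step machinery -/

lemma definable_param_set {A : Set N} {α δ : Type} (θ : L.Formula (α ⊕ δ)) (c : δ → N)
    (hc : ∀ j, c j ∈ A) : A.Definable L {x : α → N | θ.Realize (Sum.elim x c)} := by
  rw [Set.definable_iff_exists_formula_sum]
  refine ⟨θ.relabel (Sum.elim (fun a => Sum.inr a) (fun j => Sum.inl ⟨c j, hc j⟩)), ?_⟩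
  ext v
  rw [Set.mem_setOf_eq, Set.mem_setOf_eq, Formula.realize_relabel]
  constructor <;> intro h <;> [skip; skip] <;>
    · convert h using 2
      funext u
      cases u <;> rfl

lemma exists_formula_params {A : Set N} {α : Type} {s : Set (α → N)} (h : A.Definable L s) :
    ∃ (r : ℕ) (θ : L.Formula (α ⊕ Fin r)) (c : Fin r → N),
      (∀ j, c j ∈ A) ∧ s = {x | θ.Realize (Sum.elim x c)} := by
  obtain ⟨A0, hA0, hd⟩ := Set.definable_iff_finitely_definable.mp h
  haveI : Fintype ↥((A0 : Set N)) := FinsetCoe.fintype A0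
  obtain ⟨φ, hφ⟩ := Set.definable_iff_exists_formula_sum.mp hd
  let e : ↥((A0 : Set N)) ≃ Fin (Fintype.card ↥((A0 : Set N))) := Fintype.equivFin _
  refine ⟨_, φ.relabel (Sum.elim (fun a => Sum.inr (e a)) Sum.inl),
    fun j => ((e.symm j : ↥((A0 : Set N))) : N), fun j => hA0 (e.symm j).2, ?_⟩
  rw [hφ]
  ext v
  rw [Set.mem_setOf_eq, Set.mem_setOf_eq, Formula.realize_relabel]
  constructor <;> intro h <;>
    · convert h using 2
      funext u
      cases u with
      | inl a => simp [e]
      | inr b => rfl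

lemma definable_substitute {A : Set N} {α β : Type} {S : Set ((α ⊕ β) → N)}
    (h : A.Definable L S) (c : β → N) (hc : ∀ j, c j ∈ A) :
    A.Definable L {x : α → N | Sum.elim x c ∈ S} := by
  obtain ⟨φ, hφ⟩ := Set.definable_iff_exists_formula_sum.mp h
  have := definable_param_set (A := A)
    (θ := φ.relabel (Sum.elim (fun u => Sum.inr (Sum.inl u))
      (Sum.elim Sum.inl (fun j => Sum.inr (Sum.inr j)))))
    (c := Sum.elim (fun u : ↥A => (u : N)) c)
    (fun j => by cases j with | inl u => exact u.2 | inr j => exact hc j)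
  convert this using 1
  ext x
  rw [Set.mem_setOf_eq, Set.mem_setOf_eq, Formula.realize_relabel, hφ, Set.mem_setOf_eq]
  constructor <;> intro h <;>
    · convert h using 2
      funext u
      rcases u with u | u | u <;> rfl

lemma definable_exists {A : Set N} {γ δ : Type} [Finite γ] [Finite δ]
    {S : Set ((γ ⊕ δ) → N)} (h : A.Definable L S) :
    A.Definable L {x : γ → N | ∃ w : δ → N, Sum.elim x w ∈ S} := by
  have him := h.image_comp (Sum.inl : γ → γ ⊕ δ)
  convert him using 1
  ext x
  constructor
  · rintro ⟨w, hw⟩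
    exact ⟨Sum.elim x w, hw, rfl⟩
  · rintro ⟨g, hg, rfl⟩
    refine ⟨g ∘ Sum.inr, ?_⟩
    convert hg
    funext u; cases u <;> rfl

lemma definable_forall {A : Set N} {γ δ : Type} [Finite γ] [Finite δ]
    {S : Set ((γ ⊕ δ) → N)} (h : A.Definable L S) :
    A.Definable L {x : γ → N | ∀ w : δ → N, Sum.elim x w ∈ S} := by
  have := (definable_exists (h.compl)).compl
  convert this using 1
  ext x
  simp only [Set.mem_setOf_eq, Set.mem_compl_iff, not_exists, not_not]

lemma definable_coordP (hPdef : Set.Definable₁ (∅ : Set N) L P) {γ : Type} (u : γ) :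
    (∅ : Set N).Definable L {x : γ → N | x u ∈ P} := by
  have h : (∅ : Set N).Definable L {x : Fin 1 → N | x 0 ∈ P} := hPdef
  have := h.preimage_comp (fun _ : Fin 1 => u)
  exact this

lemma definable_allP (hPdef : Set.Definable₁ (∅ : Set N) L P) {γ : Type} [Fintype γ] :
    (∅ : Set N).Definable L {x : γ → N | ∀ u, x u ∈ P} := by
  classical
  have h : {x : γ → N | ∀ u, x u ∈ P}
      = ⋂ u ∈ (Finset.univ : Finset γ), {x : γ → N | x u ∈ P} := by
    ext x; simp
  rw [h]
  exact Set.definable_biInter_finset (fun u => definable_coordP hPdef u) _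

lemma definable_eqCoord {γ : Type} (u v : γ) :
    (∅ : Set N).Definable L {x : γ → N | x u = x v} := by
  rw [Set.empty_definable_iff]
  refine ⟨Term.equal (Term.var u) (Term.var v), ?_⟩
  ext x
  simp [Formula.realize_equal, Term.realize]

lemma definable_realizeSet {γ : Type} (φ : L.Formula γ) :
    (∅ : Set N).Definable L (setOf φ.Realize) :=
  Set.empty_definable_iff.mpr ⟨φ, rfl⟩

lemma definable_of_finite {γ : Type} [Fintype γ] {s : Set (γ → N)} (hfin : s.Finite)
    (hmem : ∀ f ∈ s, ∀ i, f i ∈ P) : P.Definable L s := by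
  classical
  have hrep : s = ⋃ g ∈ hfin.toFinset,
      (if hg : g ∈ s then ⋂ i ∈ (Finset.univ : Finset γ), {x : γ → N | x i = g i} else ∅) := by
    ext x
    simp only [Set.mem_iUnion, Set.Finite.mem_toFinset]
    constructor
    · intro hx
      exact ⟨x, hx, by simp [dif_pos hx]⟩
    · rintro ⟨g, hg, hx⟩
      rw [dif_pos hg] at hx
      simp only [Set.mem_iInter, Set.mem_setOf_eq, Finset.mem_univ, forall_const] at hx
      have : x = g := funext hx
      rwa [this]
  rw [hrep]
  apply Set.definable_biUnion_finset
  intro g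
  by_cases hg : g ∈ s
  · rw [dif_pos hg]
    apply Set.definable_biInter_finset
    intro i
    have := definable_param_set (A := P)
      (θ := (Term.equal (Term.var (Sum.inl i)) (Term.var (Sum.inr (0 : Fin 1))) :
        L.Formula (γ ⊕ Fin 1)))
      (c := fun _ => g i) (fun _ => hmem g hg i)
    exact this
  · rw [dif_neg hg]
    exact Set.definable_empty


/-- The set of `(a, b')`-tuples such that the `φ(·, b')`-fiber at `a` is defined by
`d.2` with some parameters from `P`. -/
def Tset (P : Set N) {n m : ℕ} (φ : L.Formula (Fin (n+1) ⊕ Fin m))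
    (d : Σ r, L.Formula (Fin n ⊕ Fin r)) : Set ((Fin 1 ⊕ Fin m) → N) :=
  {h | ∃ c : Fin d.1 → N, (∀ j, c j ∈ P) ∧ ∀ x : Fin n → N, (∀ i, x i ∈ P) →
      (φ.Realize (Sum.elim (Fin.cons (h (Sum.inl 0)) x) (h ∘ Sum.inr)) ↔
        d.2.Realize (Sum.elim x c))}

lemma Tset_definable (hPdef : Set.Definable₁ (∅ : Set N) L P) {n m : ℕ}
    (φ : L.Formula (Fin (n+1) ⊕ Fin m)) (d : Σ r, L.Formula (Fin n ⊕ Fin r)) :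
    (∅ : Set N).Definable L (Tset P φ d) := by
  classical
  set γ2 := (Fin 1 ⊕ Fin m) ⊕ Fin d.1 with hγ2
  set ρa : (Fin (n+1) ⊕ Fin m) → (γ2 ⊕ Fin n) :=
    Sum.elim (Fin.cases (Sum.inl (Sum.inl (Sum.inl 0))) (fun k => Sum.inr k))
      (fun j => Sum.inl (Sum.inl (Sum.inr j))) with hρa
  set ρb : (Fin n ⊕ Fin d.1) → (γ2 ⊕ Fin n) :=
    Sum.elim (fun k => Sum.inr k) (fun j => Sum.inl (Sum.inr j)) with hρb
  set A1 : Set ((γ2 ⊕ Fin n) → N) := (fun g => g ∘ ρa) ⁻¹' (setOf φ.Realize) with hA1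
  set A2 : Set ((γ2 ⊕ Fin n) → N) := (fun g => g ∘ ρb) ⁻¹' (setOf d.2.Realize) with hA2
  set A3 : Set ((γ2 ⊕ Fin n) → N) :=
    (fun g => g ∘ (Sum.inr : Fin n → γ2 ⊕ Fin n)) ⁻¹' {x : Fin n → N | ∀ i, x i ∈ P} with hA3
  set Inner : Set ((γ2 ⊕ Fin n) → N) := A3ᶜ ∪ ((A1 ∩ A2) ∪ (A1ᶜ ∩ A2ᶜ)) with hInner
  have hInnerDef : (∅ : Set N).Definable L Inner := by
    have h1 : (∅ : Set N).Definable L A1 := (definable_realizeSet φ).preimage_comp ρa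
    have h2 : (∅ : Set N).Definable L A2 := (definable_realizeSet d.2).preimage_comp ρb
    have h3 : (∅ : Set N).Definable L A3 := (definable_allP hPdef).preimage_comp _
    exact (h3.compl.union ((h1.inter h2).union (h1.compl.inter h2.compl)))
  set AllX : Set (γ2 → N) := {h | ∀ w : Fin n → N, Sum.elim h w ∈ Inner} with hAllX
  have hAllXDef : (∅ : Set N).Definable L AllX := definable_forall hInnerDef
  set CP : Set (γ2 → N) :=
    (fun g : γ2 → N => g ∘ (Sum.inr : Fin d.1 → γ2)) ⁻¹' {c : Fin d.1 → N | ∀ j, c j ∈ P}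
    with hCP
  have hCPdef : (∅ : Set N).Definable L CP := (definable_allP hPdef).preimage_comp _
  have hfin : (∅ : Set N).Definable L
      {h : Fin 1 ⊕ Fin m → N | ∃ c : Fin d.1 → N, Sum.elim h c ∈ CP ∩ AllX} :=
    definable_exists (hCPdef.inter hAllXDef)
  convert hfin using 1
  ext h
  simp only [Tset, Set.mem_setOf_eq, hCP, hAllX, Set.mem_inter_iff, Set.mem_preimage]
  refine exists_congr fun c => and_congr ?_ ?_
  · exact Iff.rfl
  · refine forall_congr' fun x => ?_
    have hmem3 : (Sum.elim (Sum.elim h c) x ∈ A3) ↔ (∀ i, x i ∈ P) := Iff.rfl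
    have hmem1 : (Sum.elim (Sum.elim h c) x ∈ A1) ↔
        φ.Realize (Sum.elim (Fin.cons (h (Sum.inl 0)) x) (h ∘ Sum.inr)) := by
      rw [hA1, Set.mem_preimage, setOf, Set.mem_setOf_eq]
      have : (Sum.elim (Sum.elim h c) x) ∘ ρa
          = Sum.elim (Fin.cons (h (Sum.inl 0)) x) (h ∘ Sum.inr) := by
        funext u
        rcases u with i | j
        · induction i using Fin.cases <;> rfl
        · rfl
      rw [this]
    have hmem2 : (Sum.elim (Sum.elim h c) x ∈ A2) ↔ d.2.Realize (Sum.elim x c) := by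
      rw [hA2, Set.mem_preimage, setOf, Set.mem_setOf_eq]
      have : (Sum.elim (Sum.elim h c) x) ∘ ρb = Sum.elim x c := by
        funext u; rcases u with i | j <;> rfl
      rw [this]
    rw [hInner]
    simp only [Set.mem_union, Set.mem_inter_iff, Set.mem_compl_iff, hmem1, hmem2, hmem3]
    tauto

lemma exists_cover (hsat : IsSaturated (N := N) L)
    (hPdef : Set.Definable₁ (∅ : Set N) L P) [Infinite N] {n m : ℕ}
    (φ : L.Formula (Fin (n+1) ⊕ Fin m)) (b : Fin m → N)
    (hall : ∀ a ∈ P, ∃ d : Σ r, L.Formula (Fin n ⊕ Fin r),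
      Sum.elim (fun _ => a) b ∈ Tset P φ d) :
    ∃ (k : ℕ) (dd : Fin k → Σ r, L.Formula (Fin n ⊕ Fin r)),
      ∀ a ∈ P, ∃ j, Sum.elim (fun _ => a) b ∈ Tset P φ (dd j) := by
  classical
  set ψ : (Σ r, L.Formula (Fin n ⊕ Fin r)) → L.Formula (Fin 1 ⊕ Fin m) := fun d =>
    Classical.choose (Set.empty_definable_iff.mp (Tset_definable hPdef φ d).compl) with hψdef
  have hψ : ∀ d, (Tset P φ d)ᶜ = setOf (ψ d).Realize := fun d =>
    Classical.choose_spec (Set.empty_definable_iff.mp (Tset_definable hPdef φ d).compl)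
  obtain ⟨π, hπ⟩ := Set.empty_definable_iff.mp
    (definable_coordP hPdef (Sum.inl 0 : Fin 1 ⊕ Fin m))
  set p : Set (Σ m' : ℕ, L.Formula (Fin 1 ⊕ Fin m') × (Fin m' → N)) :=
    insert ⟨m, (π, b)⟩ {q | ∃ d : Σ r, L.Formula (Fin n ⊕ Fin r), q = ⟨m, (ψ d, b)⟩} with hp
  haveI : Finite ↥(Set.range b) := (Set.finite_range b).to_subtype
  have hcard : #↥(Set.range b) < #N :=
    lt_of_lt_of_le (Cardinal.lt_aleph0_of_finite _) (Cardinal.aleph0_le_mk N)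
  have hparams : ∀ q ∈ p, ∀ i, q.2.2 i ∈ Set.range b := by
    rintro q hq i
    rcases hq with rfl | ⟨d, rfl⟩ <;> exact Set.mem_range_self i
  have hnoreal : ¬ ∃ x : N, ∀ q ∈ p, q.2.1.Realize (Sum.elim (fun _ => x) q.2.2) := by
    rintro ⟨x, hx⟩
    have hxP : x ∈ P := by
      have h1 := hx ⟨m, (π, b)⟩ (Set.mem_insert _ _)
      have : Sum.elim (fun _ => x) b ∈ {h : Fin 1 ⊕ Fin m → N | h (Sum.inl 0) ∈ P} := by
        rw [hπ]; exact h1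
      exact this
    obtain ⟨d, hd⟩ := hall x hxP
    have h2 := hx ⟨m, (ψ d, b)⟩ (Set.mem_insert_of_mem _ ⟨d, rfl⟩)
    have : Sum.elim (fun _ => x) b ∈ (Tset P φ d)ᶜ := by rw [hψ d]; exact h2
    exact this hd
  have hfs : ¬ ∀ F : Finset (Σ m' : ℕ, L.Formula (Fin 1 ⊕ Fin m') × (Fin m' → N)), ↑F ⊆ p →
      ∃ x : N, ∀ q ∈ F, q.2.1.Realize (Sum.elim (fun _ => x) q.2.2) := by
    intro hcon
    exact hnoreal (hsat (Set.range b) hcard p hparams hcon)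
  push_neg at hfs
  obtain ⟨F, hFp, hFx⟩ := hfs
  set g : (Σ m' : ℕ, L.Formula (Fin 1 ⊕ Fin m') × (Fin m' → N)) →
      (Σ r, L.Formula (Fin n ⊕ Fin r)) := fun q =>
    if h : ∃ d : Σ r, L.Formula (Fin n ⊕ Fin r), q = ⟨m, (ψ d, b)⟩ then h.choose
    else ⟨0, ⊥⟩ with hg
  set G : Finset (Σ r, L.Formula (Fin n ⊕ Fin r)) := F.image g with hG
  refine ⟨G.card, fun j => (G.equivFin.symm j : ↥G), ?_⟩
  intro a ha
  obtain ⟨q, hqF, hqn⟩ := hFx a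
  have hqp : q ∈ p := hFp hqF
  rcases hqp with rfl | hqd
  · exfalso
    apply hqn
    show π.Realize (Sum.elim (fun _ => a) b)
    have : Sum.elim (fun _ => a) b ∈ {h : Fin 1 ⊕ Fin m → N | h (Sum.inl 0) ∈ P} := ha
    rwa [hπ] at this
  · have hex : ∃ d : Σ r, L.Formula (Fin n ⊕ Fin r), q = ⟨m, (ψ d, b)⟩ := hqd
    have hspec := hex.choose_spec
    have hgq : g q = hex.choose := dif_pos hex
    have hmemT : Sum.elim (fun _ => a) b ∈ Tset P φ hex.choose := by
      by_contra hc
      apply hqn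
      rw [hspec]
      show (ψ hex.choose).Realize (Sum.elim (fun _ => a) b)
      have : Sum.elim (fun _ => a) b ∈ (Tset P φ hex.choose)ᶜ := hc
      rwa [hψ] at this
    have hmemG : g q ∈ G := Finset.mem_image_of_mem g hqF
    refine ⟨G.equivFin ⟨g q, hmemG⟩, ?_⟩
    simp only [Equiv.symm_apply_apply]
    rw [hgq]
    exact hmemT

/-- Index type for tuples coding a fiber-definition: parameter slots for each candidate
formula, plus `k` selector slots and one reference slot. -/
def Idx (dd : Fin k → Σ r, L.Formula (Fin n ⊕ Fin r)) : Type :=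
  (Σ j : Fin k, Fin (dd j).1) ⊕ (Fin k ⊕ Fin 1)

instance (dd : Fin k → Σ r, L.Formula (Fin n ⊕ Fin r)) : Fintype (Idx dd) := by
  unfold Idx; infer_instance

/-- Slot `j` is selected. -/
def SelP (dd : Fin k → Σ r, L.Formula (Fin n ⊕ Fin r)) (j : Fin k) (t : Idx dd → N) : Prop :=
  t (Sum.inr (Sum.inl j)) ≠ t (Sum.inr (Sum.inr 0)) ∧
    ∀ j', j' ≠ j → t (Sum.inr (Sum.inl j')) = t (Sum.inr (Sum.inr 0))

/-- Decoding relation: `x` satisfies the formula selected and parametrized by `t`. -/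
def ThetaH (P : Set N) (dd : Fin k → Σ r, L.Formula (Fin n ⊕ Fin r))
    (x : Fin n → N) (t : Idx dd → N) : Prop :=
  (∀ i, x i ∈ P) ∧ ∃ j, SelP dd j t ∧
    (dd j).2.Realize (Sum.elim x (fun i => t (Sum.inl ⟨j, i⟩)))

def ThetaSet (P : Set N) (dd : Fin k → Σ r, L.Formula (Fin n ⊕ Fin r)) :
    Set ((Fin n ⊕ Idx dd) → N) :=
  {g | ThetaH P dd (g ∘ Sum.inl) (g ∘ Sum.inr)}

lemma ThetaSet_definable (hPdef : Set.Definable₁ (∅ : Set N) L P)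
    (dd : Fin k → Σ r, L.Formula (Fin n ⊕ Fin r)) :
    (∅ : Set N).Definable L (ThetaSet P dd) := by
  classical
  set PX : Set ((Fin n ⊕ Idx dd) → N) :=
    (fun g : (Fin n ⊕ Idx dd) → N => g ∘ Sum.inl) ⁻¹' {x : Fin n → N | ∀ i, x i ∈ P} with hPX
  have hPXdef : (∅ : Set N).Definable L PX := (definable_allP hPdef).preimage_comp _
  set w : Fin k → (Fin n ⊕ Idx dd) := fun j => Sum.inr (Sum.inr (Sum.inl j)) with hw
  set w0 : (Fin n ⊕ Idx dd) := Sum.inr (Sum.inr (Sum.inr 0)) with hw0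
  set SelSet : Fin k → Set ((Fin n ⊕ Idx dd) → N) := fun j =>
    {g : (Fin n ⊕ Idx dd) → N | g (w j) = g w0}ᶜ ∩
      ⋂ j' ∈ (Finset.univ.erase j), {g : (Fin n ⊕ Idx dd) → N | g (w j') = g w0} with hSelSet
  have hSelDef : ∀ j, (∅ : Set N).Definable L (SelSet j) := fun j =>
    (definable_eqCoord _ _).compl.inter
      (Set.definable_biInter_finset (fun j' => definable_eqCoord _ _) _)
  set R : Fin k → Set ((Fin n ⊕ Idx dd) → N) := fun j =>
    (fun g : (Fin n ⊕ Idx dd) → N =>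
      g ∘ (Sum.elim Sum.inl (fun i => Sum.inr (Sum.inl ⟨j, i⟩)) :
        (Fin n ⊕ Fin (dd j).1) → (Fin n ⊕ Idx dd))) ⁻¹' (setOf (dd j).2.Realize) with hR
  have hRdef : ∀ j, (∅ : Set N).Definable L (R j) := fun j =>
    (definable_realizeSet _).preimage_comp _
  have hcomp : ∀ (g : (Fin n ⊕ Idx dd) → N) (j : Fin k),
      g ∘ (Sum.elim Sum.inl (fun i => Sum.inr (Sum.inl ⟨j, i⟩)) :
        (Fin n ⊕ Fin (dd j).1) → (Fin n ⊕ Idx dd))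
      = Sum.elim (g ∘ Sum.inl) (fun i => g (Sum.inr (Sum.inl ⟨j, i⟩))) := by
    intro g j
    funext u
    rcases u with i | i <;> rfl
  have hrepr : ThetaSet P dd = PX ∩ ⋃ j ∈ (Finset.univ : Finset (Fin k)), (SelSet j ∩ R j) := by
    ext g
    constructor
    · rintro ⟨hx, j, ⟨h1, h2⟩, h3⟩
      refine ⟨hx, Set.mem_iUnion₂.mpr ⟨j, Finset.mem_univ j, ⟨?_, ?_⟩⟩⟩
      · refine ⟨h1, Set.mem_iInter₂.mpr fun j' hj' => h2 j' (Finset.ne_of_mem_erase hj')⟩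
      · show (dd j).2.Realize (g ∘ (Sum.elim Sum.inl (fun i => Sum.inr (Sum.inl ⟨j, i⟩))))
        rw [hcomp g j]
        exact h3
    · rintro ⟨hx, hu⟩
      obtain ⟨j, -, ⟨h1, h2⟩, h3⟩ := Set.mem_iUnion₂.mp hu
      refine ⟨hx, j, ⟨h1, fun j' hj' => Set.mem_iInter₂.mp h2 j'
        (Finset.mem_erase.mpr ⟨hj', Finset.mem_univ _⟩)⟩, ?_⟩
      have h3' : (dd j).2.Realize (g ∘ (Sum.elim Sum.inl
          (fun i => Sum.inr (Sum.inl ⟨j, i⟩)))) := h3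
      rwa [hcomp g j] at h3'
  rw [hrepr]
  exact hPXdef.inter (Set.definable_biUnion_finset (fun j => (hSelDef j).inter (hRdef j)) _)


-- MAIN STEP
lemma step_main (hsat : IsSaturated (N := N) L)
    (hPdef : Set.Definable₁ (∅ : Set N) L P)
    (hfn : ∀ (Z : EqRel L N P) (f : DefFnToSort L P Z), P.Definable L f.graph)
    {n : ℕ}
    (IH : ∀ s : Set (Fin n → N), (univ : Set N).Definable L s →
      (∀ f ∈ s, ∀ i, f i ∈ P) → P.Definable L s)
    {s : Set (Fin (n+1) → N)} (hdef : (univ : Set N).Definable L s)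
    (hs : ∀ f ∈ s, ∀ i, f i ∈ P) : P.Definable L s := by
  classical
  rcases finite_or_infinite N with hfinN | hinfN
  · exact definable_of_finite (Set.toFinite s) hs
  by_cases hP2 : ∃ p0 ∈ P, ∃ p1 ∈ P, p0 ≠ p1
  swap
  · push_neg at hP2
    have hsub : s.Subsingleton := fun f hf g hg =>
      funext fun i => hP2 (f i) (hs f hf i) (g i) (hs g hg i)
    exact definable_of_finite hsub.finite hs
  obtain ⟨p0, hp0, p1, hp1, hne⟩ := hP2
  obtain ⟨m, φ, b, -, hsφ⟩ := exists_formula_params hdef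
  have hsmem : ∀ v : Fin (n+1) → N, φ.Realize (Sum.elim v b) → ∀ i, v i ∈ P := by
    intro v hv i
    exact hs v (by rw [hsφ]; exact hv) i
  -- every fiber is coded in P
  have hfib : ∀ a ∈ P, ∃ d : Σ r, L.Formula (Fin n ⊕ Fin r),
      Sum.elim (fun _ => a) b ∈ Tset P φ d := by
    intro a ha
    have hfibdef : (univ : Set N).Definable L
        {x : Fin n → N | φ.Realize (Sum.elim (Fin.cons a x) b)} := by
      set ρ1 : (Fin (n+1) ⊕ Fin m) → (Fin n ⊕ Fin (m+1)) :=
        Sum.elim (Fin.cases (Sum.inr 0) (fun kk => Sum.inl kk)) (fun j => Sum.inr j.succ)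
        with hρ1
      have h2 := (((definable_realizeSet φ).mono
        (Set.empty_subset (univ : Set N))).preimage_comp ρ1)
      have h3 := definable_substitute h2 (Fin.cons a b) (fun _ => Set.mem_univ _)
      convert h3 using 1
      ext x
      rw [Set.mem_setOf_eq, Set.mem_setOf_eq, Set.mem_preimage, setOf, Set.mem_setOf_eq]
      have he : (Sum.elim x (Fin.cons a b)) ∘ ρ1 = Sum.elim (Fin.cons a x) b := by
        funext u
        rcases u with i | j
        · induction i using Fin.cases <;> simp [hρ1]
        · rfl
      rw [he]
    have hfibP : ∀ x ∈ {x : Fin n → N | φ.Realize (Sum.elim (Fin.cons a x) b)},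
        ∀ i, x i ∈ P := by
      intro x hx i
      have := hsmem _ hx i.succ
      simpa using this
    obtain ⟨r, θ, c, hcP, heq⟩ := exists_formula_params (IH _ hfibdef hfibP)
    refine ⟨⟨r, θ⟩, c, hcP, fun x _ => ?_⟩
    show φ.Realize (Sum.elim (Fin.cons a x) b) ↔ θ.Realize (Sum.elim x c)
    exact Set.ext_iff.mp heq x
  obtain ⟨k, dd, hcov⟩ := exists_cover hsat hPdef φ b hfib
  set NI := Fintype.card (Idx dd) with hNI
  set ι : Idx dd ≃ Fin NI := Fintype.equivFin _ with hι
  set tupI : (Fin NI → N) → (Idx dd → N) := fun u => u ∘ ι with htupI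
  -- the equivalence relation
  set rel : Set ((Fin NI ⊕ Fin NI) → N) := {g | (∀ v, g v ∈ P) ∧ ∀ x : Fin n → N,
    (ThetaH P dd x (tupI (g ∘ Sum.inl)) ↔ ThetaH P dd x (tupI (g ∘ Sum.inr)))} with hrel
  have hreldef : (∅ : Set N).Definable L rel := by
    set σ1 : (Fin n ⊕ Idx dd) → ((Fin NI ⊕ Fin NI) ⊕ Fin n) :=
      Sum.elim (fun i => Sum.inr i) (fun v => Sum.inl (Sum.inl (ι v))) with hσ1
    set σ2 : (Fin n ⊕ Idx dd) → ((Fin NI ⊕ Fin NI) ⊕ Fin n) :=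
      Sum.elim (fun i => Sum.inr i) (fun v => Sum.inl (Sum.inr (ι v))) with hσ2
    set B1 := (fun g : ((Fin NI ⊕ Fin NI) ⊕ Fin n) → N => g ∘ σ1) ⁻¹' ThetaSet P dd with hB1
    set B2 := (fun g : ((Fin NI ⊕ Fin NI) ⊕ Fin n) → N => g ∘ σ2) ⁻¹' ThetaSet P dd with hB2
    have hB1d : (∅ : Set N).Definable L B1 := (ThetaSet_definable hPdef dd).preimage_comp _
    have hB2d : (∅ : Set N).Definable L B2 := (ThetaSet_definable hPdef dd).preimage_comp _
    have hforall : (∅ : Set N).Definable L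
        {g : (Fin NI ⊕ Fin NI) → N | ∀ x : Fin n → N,
          Sum.elim g x ∈ (B1 ∩ B2) ∪ (B1ᶜ ∩ B2ᶜ)} :=
      definable_forall ((hB1d.inter hB2d).union (hB1d.compl.inter hB2d.compl))
    have hrepr : rel = {g : (Fin NI ⊕ Fin NI) → N | ∀ v, g v ∈ P} ∩
        {g : (Fin NI ⊕ Fin NI) → N | ∀ x : Fin n → N,
          Sum.elim g x ∈ (B1 ∩ B2) ∪ (B1ᶜ ∩ B2ᶜ)} := by
      ext g
      have hm1 : ∀ x : Fin n → N, (Sum.elim g x ∈ B1) ↔ ThetaH P dd x (tupI (g ∘ Sum.inl)) :=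
        fun x => Iff.rfl
      have hm2 : ∀ x : Fin n → N, (Sum.elim g x ∈ B2) ↔ ThetaH P dd x (tupI (g ∘ Sum.inr)) :=
        fun x => Iff.rfl
      constructor
      · rintro ⟨hgP, hiff⟩
        refine ⟨hgP, fun x => ?_⟩
        by_cases hx : ThetaH P dd x (tupI (g ∘ Sum.inl))
        · exact Or.inl ⟨(hm1 x).mpr hx, (hm2 x).mpr ((hiff x).mp hx)⟩
        · exact Or.inr ⟨fun hc => hx ((hm1 x).mp hc),
            fun hc => hx ((hiff x).mpr ((hm2 x).mp hc))⟩
      · rintro ⟨hgP, hiff⟩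
        refine ⟨hgP, fun x => ?_⟩
        rcases hiff x with ⟨h1, h2⟩ | ⟨h1, h2⟩
        · exact ⟨fun _ => (hm2 x).mp h2, fun _ => (hm1 x).mp h1⟩
        · exact ⟨fun hc => absurd ((hm1 x).mpr hc) h1,
            fun hc => absurd ((hm2 x).mpr hc) h2⟩
    rw [hrepr]
    exact (definable_allP hPdef).inter hforall
  set E : EqRel L N P :=
    { n := NI
      rel := rel
      definable := hreldef
      mem_P := fun g hg i => hg.1 i
      refl := fun f hf => ⟨fun v => by rcases v with v | v <;> exact hf v, fun x => Iff.rfl⟩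
      symm := fun f g h => ⟨fun v => by
          rcases v with v | v
          exacts [h.1 (Sum.inr v), h.1 (Sum.inl v)],
        fun x => (h.2 x).symm⟩
      trans := fun f g h hfg hgh => ⟨fun v => by
          rcases v with v | v
          exacts [hfg.1 (Sum.inl v), hgh.1 (Sum.inr v)],
        fun x => (hfg.2 x).trans (hgh.2 x)⟩ } with hE
  -- the graph of the fiber-code function
  set graf : Set ((Fin 1 ⊕ Fin NI) → N) := {g | g (Sum.inl 0) ∈ P ∧ (∀ v, g (Sum.inr v) ∈ P) ∧
    ∀ x : Fin n → N, (φ.Realize (Sum.elim (Fin.cons (g (Sum.inl 0)) x) b) ↔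
      ThetaH P dd x (tupI (g ∘ Sum.inr)))} with hgraf
  have hgrafdef : (univ : Set N).Definable L graf := by
    set τ : (Fin (n+1) ⊕ Fin m) → (((Fin 1 ⊕ Fin NI) ⊕ Fin n) ⊕ Fin m) :=
      Sum.elim (Fin.cases (Sum.inl (Sum.inl (Sum.inl 0))) (fun kk => Sum.inl (Sum.inr kk)))
        (fun j => Sum.inr j) with hτ
    set σg : (Fin n ⊕ Idx dd) → ((Fin 1 ⊕ Fin NI) ⊕ Fin n) :=
      Sum.elim (fun i => Sum.inr i) (fun v => Sum.inl (Sum.inr (ι v))) with hσg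
    set C1 : Set (((Fin 1 ⊕ Fin NI) ⊕ Fin n) → N) :=
      {G | Sum.elim G b ∈ (fun g : (((Fin 1 ⊕ Fin NI) ⊕ Fin n) ⊕ Fin m) → N => g ∘ τ) ⁻¹'
        setOf φ.Realize} with hC1
    set C2 : Set (((Fin 1 ⊕ Fin NI) ⊕ Fin n) → N) :=
      (fun g : ((Fin 1 ⊕ Fin NI) ⊕ Fin n) → N => g ∘ σg) ⁻¹' ThetaSet P dd with hC2
    have hC1d : (univ : Set N).Definable L C1 :=
      definable_substitute (((definable_realizeSet φ).mono
        (Set.empty_subset _)).preimage_comp τ) b (fun _ => Set.mem_univ _)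
    have hC2d : (univ : Set N).Definable L C2 :=
      ((ThetaSet_definable hPdef dd).mono (Set.empty_subset _)).preimage_comp _
    have hforall : (univ : Set N).Definable L
        {g : (Fin 1 ⊕ Fin NI) → N | ∀ x : Fin n → N,
          Sum.elim g x ∈ (C1 ∩ C2) ∪ (C1ᶜ ∩ C2ᶜ)} :=
      definable_forall ((hC1d.inter hC2d).union (hC1d.compl.inter hC2d.compl))
    have hm1 : ∀ (g : (Fin 1 ⊕ Fin NI) → N) (x : Fin n → N),
        (Sum.elim g x ∈ C1) ↔ φ.Realize (Sum.elim (Fin.cons (g (Sum.inl 0)) x) b) := by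
      intro g x
      rw [hC1, Set.mem_setOf_eq, Set.mem_preimage, setOf, Set.mem_setOf_eq]
      have he : (Sum.elim (Sum.elim g x) b) ∘ τ
          = Sum.elim (Fin.cons (g (Sum.inl 0)) x) b := by
        funext u
        rcases u with i | j
        · induction i using Fin.cases <;> simp [hτ]
        · rfl
      rw [he]
    have hm2 : ∀ (g : (Fin 1 ⊕ Fin NI) → N) (x : Fin n → N),
        (Sum.elim g x ∈ C2) ↔ ThetaH P dd x (tupI (g ∘ Sum.inr)) := fun g x => Iff.rfl
    have hrepr : graf = {g : (Fin 1 ⊕ Fin NI) → N | g (Sum.inl 0) ∈ P} ∩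
        ({g : (Fin 1 ⊕ Fin NI) → N | ∀ v, g (Sum.inr v) ∈ P} ∩
        {g : (Fin 1 ⊕ Fin NI) → N | ∀ x : Fin n → N,
          Sum.elim g x ∈ (C1 ∩ C2) ∪ (C1ᶜ ∩ C2ᶜ)}) := by
      ext g
      constructor
      · rintro ⟨h1, h2, h3⟩
        refine ⟨h1, h2, fun x => ?_⟩
        by_cases hx : φ.Realize (Sum.elim (Fin.cons (g (Sum.inl 0)) x) b)
        · exact Or.inl ⟨(hm1 g x).mpr hx, (hm2 g x).mpr ((h3 x).mp hx)⟩
        · exact Or.inr ⟨fun hc => hx ((hm1 g x).mp hc),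
            fun hc => hx ((h3 x).mpr ((hm2 g x).mp hc))⟩
      · rintro ⟨h1, h2, h3⟩
        refine ⟨h1, h2, fun x => ?_⟩
        rcases h3 x with ⟨ha, hb⟩ | ⟨ha, hb⟩
        · exact ⟨fun _ => (hm2 g x).mp hb, fun _ => (hm1 g x).mp ha⟩
        · exact ⟨fun hc => absurd ((hm1 g x).mpr hc) ha,
            fun hc => absurd ((hm2 g x).mpr hc) hb⟩
    rw [hrepr]
    have hq1 : (univ : Set N).Definable L {g : (Fin 1 ⊕ Fin NI) → N | g (Sum.inl 0) ∈ P} :=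
      (definable_coordP hPdef _).mono (Set.empty_subset _)
    have hq2 : (univ : Set N).Definable L
        {g : (Fin 1 ⊕ Fin NI) → N | ∀ v, g (Sum.inr v) ∈ P} := by
      have := ((definable_allP hPdef (γ := Fin NI)).mono
        (Set.empty_subset (univ : Set N))).preimage_comp (Sum.inr : Fin NI → Fin 1 ⊕ Fin NI)
      exact this
    exact hq1.inter (hq2.inter hforall)
  -- the function P → Z given by fiber codes
  have htotal : ∀ a ∈ P, ∃ r : Fin NI → N, Sum.elim (fun _ => a) r ∈ graf := by
    intro a ha
    obtain ⟨j, c, hcP, hiff⟩ := hcov a ha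
    set t : Idx dd → N := Sum.elim
      (fun q => if h : q.1 = j then c (Fin.cast (congrArg (fun z => (dd z).1) h) q.2) else p0)
      (Sum.elim (fun j' => if j' = j then p1 else p0) (fun _ => p0)) with ht
    have htP : ∀ v, t v ∈ P := by
      rintro (⟨j', i⟩ | (j' | o))
      · show (if h : j' = j then c (Fin.cast (congrArg (fun z => (dd z).1) h) i) else p0) ∈ P
        split
        · exact hcP _
        · exact hp0
      · show (if j' = j then p1 else p0) ∈ P
        split
        · exact hp1
        · exact hp0
      · exact hp0
    have hSel : SelP dd j t := by
      constructor
      · show (if j = j then p1 else p0) ≠ p0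
        rw [if_pos rfl]
        exact hne.symm
      · intro j' hj'
        show (if j' = j then p1 else p0) = p0
        rw [if_neg hj']
    have hparam : (fun i => t (Sum.inl ⟨j, i⟩)) = c := by
      funext i
      show (if h : j = j then c (Fin.cast (congrArg (fun z => (dd z).1) h) i) else p0) = c i
      rw [dif_pos rfl]
      exact congrArg c (Fin.ext rfl)
    refine ⟨t ∘ ι.symm, ha, fun v => htP _, fun x => ?_⟩
    have htup : tupI ((Sum.elim (fun _ : Fin 1 => a) (t ∘ ι.symm)) ∘ Sum.inr) = t := by
      funext v
      show t (ι.symm (ι v)) = t v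
      rw [Equiv.symm_apply_apply]
    rw [htup]
    show φ.Realize (Sum.elim (Fin.cons a x) b) ↔ ThetaH P dd x t
    constructor
    · intro hφx
      have hxP : ∀ i, x i ∈ P := by
        intro i
        have : ∀ i', (Fin.cons a x : Fin (n+1) → N) i' ∈ P := hsmem _ hφx
        have h2 := this i.succ
        simpa using h2
      refine ⟨hxP, j, hSel, ?_⟩
      rw [hparam]
      exact (hiff x hxP).mp hφx
    · rintro ⟨hxP, j', hSel', hreal⟩
      have hj' : j' = j := by
        by_contra hjj
        apply hSel'.1
        show (if j' = j then p1 else p0) = p0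
        rw [if_neg hjj]
      subst hj'
      rw [hparam] at hreal
      exact (hiff x hxP).mpr hreal
  set f : DefFnToSort L P E :=
    { graph := graf
      definable := hgrafdef
      dom := fun g hg => ⟨hg.1, hg.2.1⟩
      total := htotal
      functional := fun x r r' hr hr' =>
        ⟨fun v => by rcases v with v | v; exacts [hr.2.1 v, hr'.2.1 v],
          fun y => ((hr.2.2 y).symm.trans (hr'.2.2 y))⟩
      saturated := fun x r r' hr hrel2 =>
        ⟨hr.1, fun v => hrel2.1 (Sum.inr v), fun y => (hr.2.2 y).trans (hrel2.2 y)⟩ } with hf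
  have hgr : P.Definable L graf := hfn E f
  -- final assembly
  set μ1 : (Fin 1 ⊕ Fin NI) → (Fin (n+1) ⊕ Fin NI) :=
    Sum.elim (fun _ => Sum.inl 0) (fun v => Sum.inr v) with hμ1
  set μ2 : (Fin n ⊕ Idx dd) → (Fin (n+1) ⊕ Fin NI) :=
    Sum.elim (fun i => Sum.inl i.succ) (fun v => Sum.inr (ι v)) with hμ2
  set K1 : Set ((Fin (n+1) ⊕ Fin NI) → N) :=
    (fun g : (Fin (n+1) ⊕ Fin NI) → N => g ∘ μ1) ⁻¹' graf with hK1
  set K2 : Set ((Fin (n+1) ⊕ Fin NI) → N) :=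
    (fun g : (Fin (n+1) ⊕ Fin NI) → N => g ∘ μ2) ⁻¹' ThetaSet P dd with hK2
  have hK1d : P.Definable L K1 := hgr.preimage_comp _
  have hK2d : P.Definable L K2 :=
    ((ThetaSet_definable hPdef dd).mono (Set.empty_subset _)).preimage_comp _
  have hExd : P.Definable L
      {g : Fin (n+1) → N | ∃ h : Fin NI → N, Sum.elim g h ∈ K1 ∩ K2} :=
    definable_exists (hK1d.inter hK2d)
  have hme1 : ∀ (g : Fin (n+1) → N) (h : Fin NI → N),
      (Sum.elim g h ∈ K1) ↔ Sum.elim (fun _ => g 0) h ∈ graf := by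
    intro g h
    rw [hK1, Set.mem_preimage]
    have he : (Sum.elim g h) ∘ μ1 = Sum.elim (fun _ => g 0) h := by
      funext u
      rcases u with o | v <;> rfl
    rw [he]
  have hme2 : ∀ (g : Fin (n+1) → N) (h : Fin NI → N),
      (Sum.elim g h ∈ K2) ↔ ThetaH P dd (Fin.tail g) (tupI h) := by
    intro g h
    rw [hK2, Set.mem_preimage]
    exact Iff.rfl
  have hseq : s = {g : Fin (n+1) → N | ∀ i, g i ∈ P} ∩
      {g : Fin (n+1) → N | ∃ h : Fin NI → N, Sum.elim g h ∈ K1 ∩ K2} := by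
    rw [hsφ]
    ext g
    constructor
    · intro hg
      have hgP : ∀ i, g i ∈ P := hsmem g hg
      obtain ⟨r, hrg⟩ := htotal (g 0) (hgP 0)
      refine ⟨hgP, r, (hme1 g r).mpr hrg, (hme2 g r).mpr ?_⟩
      have h3 := hrg.2.2 (Fin.tail g)
      have htup : tupI ((Sum.elim (fun _ : Fin 1 => g 0) r) ∘ Sum.inr) = tupI r := rfl
      rw [htup] at h3
      apply h3.mp
      show φ.Realize (Sum.elim (Fin.cons (g 0) (Fin.tail g)) b)
      rw [Fin.cons_self_tail]
      exact hg
    · rintro ⟨hgP, h, hk1, hk2⟩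
      have hg1 := (hme1 g h).mp hk1
      have h3 := hg1.2.2 (Fin.tail g)
      have h4 := h3.mpr ((hme2 g h).mp hk2)
      show φ.Realize (Sum.elim g b)
      have h5 : φ.Realize (Sum.elim (Fin.cons (g 0) (Fin.tail g)) b) := h4
      rwa [Fin.cons_self_tail] at h5
  rw [hseq]
  exact ((definable_allP hPdef).mono (Set.empty_subset P)).inter hExd


/-- (Proof of Theorem 1.4 from Proposition 3.1: the inductive step.)  Let `T` be a complete
theory, `N` a saturated model of `T`, and `P` a `∅`-definable set in `N` which is `1`-stably
embedded in `N` and such that every definable (with parameters in `N`) function from `P` to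
a sort `Z` of `𝒫^eq` is coded in `P`.  Then for every `n`, every subset of `Pⁿ` definable
in `N` with parameters is coded in `P`; that is, `P` is stably embedded in `N`. -/
theorem stablyEmbedded_of_oneStablyEmbedded_of_functions_coded
    (hsat : IsSaturated (N := N) L) (P : Set N)
    (hPdef : Set.Definable₁ (∅ : Set N) L P)
    (h1 : OneStablyEmbedded L P)
    (hfn : ∀ (Z : EqRel L N P) (f : DefFnToSort L P Z), P.Definable L f.graph) :
    StablyEmbedded L P := by
  intro n
  induction n with
  | zero =>
    intro s hdef hmem
    rcases Set.eq_empty_or_nonempty s with rfl | ⟨x, hx⟩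
    · exact Set.definable_empty
    · have hu : s = Set.univ := Set.eq_univ_of_forall fun y => by
        have hyx : y = x := funext fun i => i.elim0
        rwa [hyx]
      rw [hu]
      exact Set.definable_univ
  | succ n IH =>
    intro s hdef hmem
    exact step_main hsat hPdef hfn IH hdef hmem

end StablyEmbeddedPaper
end
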